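/- arXiv:1710.10792 — 6 statements merged into one kernel-verified Lean document; each statement's English description precedes it below -/
import Mathlib

section
/- Hoffman–Wielandt inequality: for any two n×n Hermitian matrices A and B with complex entries, if λ_1(A) ≥ λ_2(A) ≥ … ≥ λ_n(A) and λ_1(B) ≥ … ≥ λ_n(B) denote their eigenvalues listed in decreasing order (with multiplicity), then ∑_{i=1}^n (λ_i(A) − λ_i(B))² ≤ Tr((A − B)²). -/
open Matrix

/-- Trace of the square of a Hermitian matrix is the sum of squared eigenvalues. -/
private lemma trace_sq_eq {n : ℕ} (A : Matrix (Fin n) (Fin n) ℂ) (hA : A.IsHermitian) :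
    (A * A).trace = ∑ i, (hA.eigenvalues i : ℂ) ^ 2 := by
  set U : Matrix (Fin n) (Fin n) ℂ := (hA.eigenvectorUnitary : Matrix (Fin n) (Fin n) ℂ)
  have hU : star U * U = 1 := Matrix.mem_unitaryGroup_iff'.mp hA.eigenvectorUnitary.2
  set D : Matrix (Fin n) (Fin n) ℂ := diagonal (RCLike.ofReal ∘ hA.eigenvalues)
  have hspec : A = U * D * star U := hA.spectral_theorem
  calc (A * A).trace = (U * D * star U * (U * D * star U)).trace := by rw [← hspec]
    _ = (U * (D * D) * star U).trace := by
        rw [show U * D * star U * (U * D * star U) = U * (D * ((star U * U) * D)) * star U by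
          simp only [Matrix.mul_assoc], hU]
        simp [Matrix.mul_assoc]
    _ = ((star U * U) * (D * D)).trace := by
        rw [Matrix.trace_mul_cycle]
    _ = (D * D).trace := by rw [hU, Matrix.one_mul]
    _ = ∑ i, (hA.eigenvalues i : ℂ) ^ 2 := by
        simp [D, diagonal_mul_diagonal, trace_diagonal, sq]

private lemma trace_prod_eq {n : ℕ} (A B : Matrix (Fin n) (Fin n) ℂ)
    (hA : A.IsHermitian) (hB : B.IsHermitian) :
    ((A * B).trace).re = ∑ i, ∑ j,
      Complex.normSq (((star hA.eigenvectorUnitary * hB.eigenvectorUnitary :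
        Matrix.unitaryGroup (Fin n) ℂ) : Matrix (Fin n) (Fin n) ℂ) i j)
        * (hA.eigenvalues i * hB.eigenvalues j) := by
  set U : Matrix (Fin n) (Fin n) ℂ := (hA.eigenvectorUnitary : Matrix (Fin n) (Fin n) ℂ)
  set V : Matrix (Fin n) (Fin n) ℂ := (hB.eigenvectorUnitary : Matrix (Fin n) (Fin n) ℂ)
  set W : Matrix (Fin n) (Fin n) ℂ := star U * V with hW
  have hWcoe : ((star hA.eigenvectorUnitary * hB.eigenvectorUnitary :
      Matrix.unitaryGroup (Fin n) ℂ) : Matrix (Fin n) (Fin n) ℂ) = W := rfl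
  rw [hWcoe]
  set Da : Matrix (Fin n) (Fin n) ℂ := diagonal (RCLike.ofReal ∘ hA.eigenvalues)
  set Db : Matrix (Fin n) (Fin n) ℂ := diagonal (RCLike.ofReal ∘ hB.eigenvalues)
  have hcalc : (A * B).trace = (Da * W * Db * star W).trace := by
    conv_lhs => rw [show A * B = (U * Da * star U) * (V * Db * star V) from
      congrArg₂ (· * ·) hA.spectral_theorem hB.spectral_theorem]
    rw [show (U * Da * star U) * (V * Db * star V) = U * (Da * ((star U * V) * Db * star V)) by
      simp only [Matrix.mul_assoc], Matrix.trace_mul_comm U]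
    rw [show Da * (star U * V * Db * star V) * U = Da * (star U * V) * Db * (star V * U) by
      simp only [Matrix.mul_assoc]]
    congr 1
    rw [hW, Matrix.star_mul, star_star]
  rw [hcalc]
  have hentry : ∀ i, (Da * W * Db * star W) i i
      = ∑ j, (Complex.normSq (W i j) : ℂ) * ((hA.eigenvalues i : ℂ) * (hB.eigenvalues j : ℂ)) := by
    intro i
    rw [Matrix.mul_apply]
    refine Finset.sum_congr rfl fun j _ => ?_
    have h1 : (Da * W * Db) i j = (hA.eigenvalues i : ℂ) * W i j * (hB.eigenvalues j : ℂ) := by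
      simp [Da, Db, Matrix.diagonal_mul, Matrix.mul_diagonal]
    have h2 : (star W) j i = starRingEnd ℂ (W i j) := by
      simp [Matrix.star_apply]
    rw [h1, h2]
    rw [show (hA.eigenvalues i : ℂ) * W i j * (hB.eigenvalues j : ℂ) * starRingEnd ℂ (W i j)
        = (hA.eigenvalues i : ℂ) * (hB.eigenvalues j : ℂ) * (W i j * starRingEnd ℂ (W i j)) by
      ring, Complex.mul_conj]
    norm_cast
    ring
  rw [Matrix.trace]
  simp only [Matrix.diag_apply, hentry]
  rw [Complex.re_sum]
  refine Finset.sum_congr rfl fun i _ => ?_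
  rw [Complex.re_sum]
  refine Finset.sum_congr rfl fun j _ => ?_
  simp

private lemma normSq_doublyStochastic {n : ℕ} (W : Matrix.unitaryGroup (Fin n) ℂ) :
    (Matrix.of fun i j => Complex.normSq ((W : Matrix (Fin n) (Fin n) ℂ) i j))
      ∈ doublyStochastic ℝ (Fin n) := by
  have h1 : (W : Matrix (Fin n) (Fin n) ℂ) * star (W : Matrix (Fin n) (Fin n) ℂ) = 1 :=
    Matrix.mem_unitaryGroup_iff.mp W.2
  have h2 : star (W : Matrix (Fin n) (Fin n) ℂ) * (W : Matrix (Fin n) (Fin n) ℂ) = 1 :=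
    Matrix.mem_unitaryGroup_iff'.mp W.2
  rw [mem_doublyStochastic]
  refine ⟨fun i j => Complex.normSq_nonneg _, ?_, ?_⟩
  · funext i
    have := congrFun (congrFun h1 i) i
    rw [Matrix.mul_apply] at this
    simp only [Matrix.one_apply_eq] at this
    have hsum : ∑ j, (Complex.normSq ((W : Matrix (Fin n) (Fin n) ℂ) i j) : ℂ) = 1 := by
      rw [← this]
      refine Finset.sum_congr rfl fun j _ => ?_
      rw [Matrix.star_apply, ← Complex.mul_conj]
      rfl
    rw [← Complex.ofReal_sum] at hsum
    have := Complex.ofReal_eq_one.mp hsum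
    simpa [Matrix.mulVec, dotProduct] using this
  · funext j
    have := congrFun (congrFun h2 j) j
    rw [Matrix.mul_apply] at this
    simp only [Matrix.one_apply_eq] at this
    have hsum : ∑ i, (Complex.normSq ((W : Matrix (Fin n) (Fin n) ℂ) i j) : ℂ) = 1 := by
      rw [← this]
      refine Finset.sum_congr rfl fun i _ => ?_
      rw [Matrix.star_apply, ← Complex.mul_conj]
      ring_nf
      rfl
    rw [← Complex.ofReal_sum] at hsum
    have := Complex.ofReal_eq_one.mp hsum
    simpa [Matrix.vecMul, dotProduct] using this

private lemma ds_sum_le {n : ℕ} (S : Matrix (Fin n) (Fin n) ℝ)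
    (hS : S ∈ doublyStochastic ℝ (Fin n))
    (μA μB a b : Fin n → ℝ) (hμA : Antitone μA) (hμB : Antitone μB)
    (σ τ : Equiv.Perm (Fin n)) (ha : μA = a ∘ σ) (hb : μB = b ∘ τ) :
    ∑ i, ∑ j, S i j * (a i * b j) ≤ ∑ i, μA i * μB i := by
  obtain ⟨w, hw0, hw1, hwS⟩ := exists_eq_sum_perm_of_mem_doublyStochastic hS
  have hperm : ∀ π : Equiv.Perm (Fin n), ∑ i, a i * b (π i) ≤ ∑ i, μA i * μB i := by
    intro π
    have hmono : Monovary μA μB := hμA.monovary hμB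
    have hbx : ∀ x, b x = μB (τ.symm x) := fun x => by rw [hb]; simp
    calc ∑ i, a i * b (π i) = ∑ i, a (σ i) * b (π (σ i)) :=
          (Equiv.sum_comp σ (fun i => a i * b (π i))).symm
      _ = ∑ i, μA i * μB ((σ.trans (π.trans τ.symm)) i) := by
          refine Finset.sum_congr rfl fun i _ => ?_
          rw [hbx (π (σ i)), show a (σ i) = μA i from (congrFun ha i).symm]
          rfl
      _ ≤ ∑ i, μA i * μB i := hmono.sum_mul_comp_perm_le_sum_mul
  have hSval : ∀ i j, S i j = ∑ π : Equiv.Perm (Fin n), w π * (π.permMatrix ℝ) i j := by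
    intro i j
    rw [← hwS]
    simp only [Matrix.sum_apply, Matrix.smul_apply, smul_eq_mul]
  have hPsum : ∀ (π : Equiv.Perm (Fin n)) i,
      ∑ j, (π.permMatrix ℝ) i j * (a i * b j) = a i * b (π i) := by
    intro π i
    have hP : ∀ j, (π.permMatrix ℝ) i j = if π i = j then 1 else 0 := by
      intro j
      rw [show (π.permMatrix ℝ) i j = π.toPEquiv.toMatrix i j from rfl,
        PEquiv.toMatrix_toPEquiv_apply, Pi.single_apply]
      exact if_congr eq_comm rfl rfl
    rw [Finset.sum_eq_single (π i)]
    · rw [hP]; simp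
    · intro j _ hj
      rw [hP]; simp [Ne.symm hj]
    · intro h; exact absurd (Finset.mem_univ _) h
  calc ∑ i, ∑ j, S i j * (a i * b j)
      = ∑ π : Equiv.Perm (Fin n), w π * ∑ i, a i * b (π i) := by
        have h0 : ∀ i j, S i j * (a i * b j)
            = ∑ π : Equiv.Perm (Fin n), w π * ((π.permMatrix ℝ) i j * (a i * b j)) := by
          intro i j
          rw [hSval, Finset.sum_mul]
          simp [mul_assoc]
        simp only [h0]
        calc ∑ i, ∑ j, ∑ π : Equiv.Perm (Fin n), w π * ((π.permMatrix ℝ) i j * (a i * b j))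
            = ∑ i, ∑ π : Equiv.Perm (Fin n), ∑ j, w π * ((π.permMatrix ℝ) i j * (a i * b j)) :=
              Finset.sum_congr rfl fun i _ => Finset.sum_comm
          _ = ∑ π : Equiv.Perm (Fin n), ∑ i, ∑ j, w π * ((π.permMatrix ℝ) i j * (a i * b j)) :=
              Finset.sum_comm
          _ = ∑ π : Equiv.Perm (Fin n), w π * ∑ i, a i * b (π i) := by
              refine Finset.sum_congr rfl fun π _ => ?_
              rw [Finset.mul_sum]
              refine Finset.sum_congr rfl fun i _ => ?_
              rw [← Finset.mul_sum, hPsum]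
    _ ≤ ∑ π : Equiv.Perm (Fin n), w π * ∑ i, μA i * μB i := by
        refine Finset.sum_le_sum fun π _ => ?_
        exact mul_le_mul_of_nonneg_left (hperm π) (hw0 π)
    _ = ∑ i, μA i * μB i := by
        rw [← Finset.sum_mul, hw1, one_mul]

/-- **Hoffman–Wielandt inequality.** For Hermitian `A B : Matrix (Fin n) (Fin n) ℂ`,
if `μA` and `μB` list the eigenvalues of `A` and `B` in decreasing order (with
multiplicity), then `∑ i, (μA i - μB i)^2 ≤ Tr ((A - B)^2)`. -/
theorem hoffman_wielandt {n : ℕ} (A B : Matrix (Fin n) (Fin n) ℂ)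
    (hA : A.IsHermitian) (hB : B.IsHermitian)
    (μA μB : Fin n → ℝ) (hμA : Antitone μA) (hμB : Antitone μB)
    (hA' : ∃ σ : Equiv.Perm (Fin n), μA = hA.eigenvalues ∘ σ)
    (hB' : ∃ τ : Equiv.Perm (Fin n), μB = hB.eigenvalues ∘ τ) :
    ∑ i, (μA i - μB i) ^ 2 ≤ (((A - B) * (A - B)).trace).re := by
  obtain ⟨σ, hσ⟩ := hA'
  obtain ⟨τ, hτ⟩ := hB'
  have hsqA : ((A * A).trace).re = ∑ i, μA i ^ 2 := by
    rw [trace_sq_eq A hA]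
    have h1 : ∑ i, (hA.eigenvalues i : ℂ) ^ 2 = ((∑ i, hA.eigenvalues i ^ 2 : ℝ) : ℂ) := by
      push_cast; rfl
    rw [h1, Complex.ofReal_re, hσ]
    exact (Equiv.sum_comp σ (fun i => hA.eigenvalues i ^ 2)).symm
  have hsqB : ((B * B).trace).re = ∑ i, μB i ^ 2 := by
    rw [trace_sq_eq B hB]
    have h1 : ∑ i, (hB.eigenvalues i : ℂ) ^ 2 = ((∑ i, hB.eigenvalues i ^ 2 : ℝ) : ℂ) := by
      push_cast; rfl
    rw [h1, Complex.ofReal_re, hτ]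
    exact (Equiv.sum_comp τ (fun i => hB.eigenvalues i ^ 2)).symm
  have hAB : ((A * B).trace).re ≤ ∑ i, μA i * μB i := by
    rw [trace_prod_eq A B hA hB]
    exact ds_sum_le _ (normSq_doublyStochastic _) μA μB _ _ hμA hμB σ τ hσ hτ
  have htr : (((A - B) * (A - B)).trace).re
      = ((A * A).trace).re - 2 * ((A * B).trace).re + ((B * B).trace).re := by
    have h1 : (A - B) * (A - B) = A * A - A * B - B * A + B * B := by
      noncomm_ring
    rw [h1, trace_add, trace_sub, trace_sub, Matrix.trace_mul_comm B A]
    simp only [Complex.add_re, Complex.sub_re]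
    ring
  have expand : ∑ i, (μA i - μB i) ^ 2
      = ∑ i, μA i ^ 2 - 2 * ∑ i, μA i * μB i + ∑ i, μB i ^ 2 := by
    rw [Finset.mul_sum, ← Finset.sum_sub_distrib, ← Finset.sum_add_distrib]
    exact Finset.sum_congr rfl fun i _ => by ring
  rw [htr, hsqA, hsqB, expand]
  linarith
end

section
/- For any n×n Hermitian matrices A and Δ, and any function f : ℝ → ℝ that is Lipschitz with constant k, one has |∑_{i=1}^n f(λ_i(A + Δ)) − ∑_{i=1}^n f(λ_i(A))| ≤ k √n (Tr(Δ²))^{1/2}, where λ_1(M) ≥ … ≥ λ_n(M) denote the eigenvalues of a Hermitian matrix M listed in decreasing order. -/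
open Matrix Finset

open scoped InnerProductSpace

section aux

variable {n : ℕ}

private lemma parseval_aux (v : OrthonormalBasis (Fin n) ℂ (EuclideanSpace ℂ (Fin n)))
    (x : EuclideanSpace ℂ (Fin n)) :
    ∑ j, ‖(inner ℂ x (v j) : ℂ)‖ ^ 2 = ‖x‖ ^ 2 := by
  have h := v.sum_inner_mul_inner x x
  have h2 : ∀ j, (inner ℂ x (v j) : ℂ) * inner ℂ (v j) x
      = ((‖(inner ℂ x (v j) : ℂ)‖ : ℝ) ^ 2 : ℝ) := by
    intro j
    rw [← inner_conj_symm (v j) x, RCLike.mul_conj]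
    norm_cast
  rw [Finset.sum_congr rfl (fun j _ => h2 j), inner_self_eq_norm_sq_to_K] at h
  exact Complex.ofReal_injective (by push_cast at h ⊢; exact h)

private lemma parseval_aux' (v : OrthonormalBasis (Fin n) ℂ (EuclideanSpace ℂ (Fin n)))
    (x : EuclideanSpace ℂ (Fin n)) :
    ∑ j, ‖(inner ℂ (v j) x : ℂ)‖ ^ 2 = ‖x‖ ^ 2 := by
  rw [← parseval_aux v x]
  exact Finset.sum_congr rfl fun j _ => by rw [norm_inner_symm]

private lemma toEuclideanLin_apply' (M : Matrix (Fin n) (Fin n) ℂ)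
    (x : EuclideanSpace ℂ (Fin n)) :
    Matrix.toEuclideanLin M x
      = (WithLp.toLp 2 (M *ᵥ (x : Fin n → ℂ)) : EuclideanSpace ℂ (Fin n)) := rfl

private lemma trace_aux (M : Matrix (Fin n) (Fin n) ℂ)
    (v : OrthonormalBasis (Fin n) ℂ (EuclideanSpace ℂ (Fin n))) :
    ∑ j, (inner ℂ (v j) (WithLp.toLp 2 (M *ᵥ (v j : Fin n → ℂ)) :
        EuclideanSpace ℂ (Fin n)) : ℂ) = M.trace := by
  have key : ∀ k l : Fin n, ∑ j, (starRingEnd ℂ) (v j k) * v j l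
      = if k = l then 1 else 0 := by
    intro k l
    have h := v.sum_inner_mul_inner (EuclideanSpace.single l (1 : ℂ))
      (EuclideanSpace.single k (1 : ℂ))
    simp only [EuclideanSpace.inner_single_left, EuclideanSpace.inner_single_right,
      _root_.map_one, one_mul, mul_one, EuclideanSpace.single_apply,
      apply_ite (starRingEnd ℂ), map_zero] at h
    rw [← h]
    refine Finset.sum_congr rfl fun j _ => ?_
    ring
  calc ∑ j, (inner ℂ (v j) (WithLp.toLp 2 (M *ᵥ (v j : Fin n → ℂ)) :
        EuclideanSpace ℂ (Fin n)) : ℂ)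
      = ∑ j, ∑ k, (starRingEnd ℂ) (v j k) * ∑ l, M k l * v j l := by
        refine Finset.sum_congr rfl fun j _ => ?_
        rw [PiLp.inner_apply]
        refine Finset.sum_congr rfl fun k _ => ?_
        rw [RCLike.inner_apply']; rfl
    _ = ∑ k, ∑ l, M k l * ∑ j, (starRingEnd ℂ) (v j k) * v j l := by
        rw [Finset.sum_comm]
        refine Finset.sum_congr rfl fun k _ => ?_
        calc ∑ j, (starRingEnd ℂ) (v j k) * ∑ l, M k l * v j l
            = ∑ j, ∑ l, M k l * ((starRingEnd ℂ) (v j k) * v j l) := by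
              refine Finset.sum_congr rfl fun j _ => ?_
              rw [Finset.mul_sum]
              exact Finset.sum_congr rfl fun l _ => by ring
          _ = ∑ l, M k l * ∑ j, (starRingEnd ℂ) (v j k) * v j l := by
              rw [Finset.sum_comm]
              exact Finset.sum_congr rfl fun l _ => (Finset.mul_sum _ _ _).symm
    _ = M.trace := by
        simp_rw [key, mul_ite, mul_one, mul_zero]
        simp [Matrix.trace, Matrix.diag]

end aux

/-- For Hermitian matrices `A`, `Δ` and a `k`-Lipschitz function `f : ℝ → ℝ`,
`|∑ i f(λ_i(A+Δ)) - ∑ i f(λ_i(A))| ≤ k √n √(Tr Δ²)`.  (The sums over all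
eigenvalues do not depend on the chosen ordering.) -/
theorem lipschitz_sum_eigenvalues_bound {n : ℕ} (A Δ : Matrix (Fin n) (Fin n) ℂ)
    (hA : A.IsHermitian) (hΔ : Δ.IsHermitian) (k : NNReal) (f : ℝ → ℝ)
    (hf : LipschitzWith k f) :
    |(∑ i, f ((hA.add hΔ).eigenvalues i)) - ∑ i, f (hA.eigenvalues i)|
      ≤ (k : ℝ) * Real.sqrt n * Real.sqrt ((Δ * Δ).trace.re) := by
  classical
  have hB : (A + Δ).IsHermitian := hA.add hΔ
  let u := hB.eigenvectorBasis
  let v := hA.eigenvectorBasis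
  let μ : Fin n → ℝ := hB.eigenvalues
  let lam : Fin n → ℝ := hA.eigenvalues
  let c : Fin n → Fin n → ℂ := fun i j => inner ℂ (u i) (v j)
  let P : Fin n → Fin n → ℝ := fun i j => ‖c i j‖ ^ 2
  let d : Fin n → Fin n → ℝ := fun i j => μ i - lam j
  -- row and column sums of P are 1
  have rowsum : ∀ i, ∑ j, P i j = 1 := by
    intro i
    have h := parseval_aux v (u i)
    rw [u.orthonormal.1 i] at h
    simpa using h
  have colsum : ∀ j, ∑ i, P i j = 1 := by
    intro j
    have h := parseval_aux' u (v j)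
    rw [v.orthonormal.1 j] at h
    simpa using h
  have hsymB := (Matrix.isHermitian_iff_isSymmetric.1 hB)
  have hsymΔ := (Matrix.isHermitian_iff_isSymmetric.1 hΔ)
  -- the key identity : ⟪u i, Δ v j⟫ = (μ i - λ j) * c i j
  have key3 : ∀ j : Fin n, (Matrix.toEuclideanLin Δ) (v j) = Matrix.toEuclideanLin (A + Δ) (v j)
      - Matrix.toEuclideanLin A (v j) := by
    intro j
    simp [map_add, LinearMap.add_apply]
  have key3' : ∀ i j, (inner ℂ (u i) ((Matrix.toEuclideanLin Δ) (v j)) : ℂ)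
      = (d i j : ℂ) * c i j := by
    intro i j
    rw [key3 j, inner_sub_right]
    have hAv : Matrix.toEuclideanLin A (v j) = (lam j : ℝ) • v j := by
      rw [toEuclideanLin_apply']
      exact congrArg (WithLp.toLp 2) (hA.mulVec_eigenvectorBasis j)
    have hBu : Matrix.toEuclideanLin (A + Δ) (u i) = (μ i : ℝ) • u i := by
      rw [toEuclideanLin_apply']
      exact congrArg (WithLp.toLp 2) (hB.mulVec_eigenvectorBasis i)
    have h1 : (inner ℂ (u i) (Matrix.toEuclideanLin A (v j)) : ℂ) = (lam j : ℂ) * c i j := by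
      rw [hAv, RCLike.real_smul_eq_coe_smul (K := ℂ), inner_smul_right]
      rfl
    have h2 : (inner ℂ (u i) (Matrix.toEuclideanLin (A + Δ) (v j)) : ℂ)
        = (μ i : ℂ) * c i j := by
      rw [← hsymB (u i) (v j), hBu, RCLike.real_smul_eq_coe_smul (K := ℂ), inner_smul_left,
        RCLike.conj_ofReal]
      rfl
    rw [h1, h2]
    push_cast [d]
    ring
  -- Frobenius identity : ∑∑ P d² = Tr(Δ²).re
  have key4 : ∑ i, ∑ j, P i j * d i j ^ 2 = (Δ * Δ).trace.re := by
    have step1 : ∀ i j, P i j * d i j ^ 2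
        = ‖(inner ℂ (u i) ((Matrix.toEuclideanLin Δ) (v j)) : ℂ)‖ ^ 2 := by
      intro i j
      rw [key3' i j, norm_mul, mul_pow, Complex.norm_real, Real.norm_eq_abs, sq_abs]
      ring
    have step2 : ∀ j, ∑ i, ‖(inner ℂ (u i) ((Matrix.toEuclideanLin Δ) (v j)) : ℂ)‖ ^ 2
        = ‖(Matrix.toEuclideanLin Δ) (v j)‖ ^ 2 := fun j => parseval_aux' u _
    have step3 : ∀ j, (‖(Matrix.toEuclideanLin Δ) (v j)‖ : ℝ) ^ 2
        = (inner ℂ (v j) (WithLp.toLp 2 ((Δ * Δ) *ᵥ (v j : Fin n → ℂ)) :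
            EuclideanSpace ℂ (Fin n)) : ℂ).re := by
      intro j
      have hsym := hsymΔ (v j) ((Matrix.toEuclideanLin Δ) (v j))
      have hL : Matrix.toEuclideanLin Δ ((Matrix.toEuclideanLin Δ) (v j))
          = (WithLp.toLp 2 ((Δ * Δ) *ᵥ (v j : Fin n → ℂ)) : EuclideanSpace ℂ (Fin n)) := by
        rw [toEuclideanLin_apply', toEuclideanLin_apply']
        exact congrArg (WithLp.toLp 2) (Matrix.mulVec_mulVec _ Δ Δ)
      rw [hL] at hsym
      rw [← hsym, inner_self_eq_norm_sq_to_K]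
      show ‖(Matrix.toEuclideanLin Δ) (v j)‖ ^ 2
        = (Complex.ofReal ‖(Matrix.toEuclideanLin Δ) (v j)‖ ^ 2).re
      rw [← Complex.ofReal_pow, Complex.ofReal_re]
    calc ∑ i, ∑ j, P i j * d i j ^ 2
        = ∑ j, ∑ i, ‖(inner ℂ (u i) ((Matrix.toEuclideanLin Δ) (v j)) : ℂ)‖ ^ 2 := by
          rw [Finset.sum_comm]
          exact Finset.sum_congr rfl fun j _ => Finset.sum_congr rfl fun i _ => step1 i j
      _ = ∑ j, (inner ℂ (v j) (WithLp.toLp 2 ((Δ * Δ) *ᵥ (v j : Fin n → ℂ)) :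
            EuclideanSpace ℂ (Fin n)) : ℂ).re :=
          Finset.sum_congr rfl fun j _ => by rw [step2 j, step3 j]
      _ = (Δ * Δ).trace.re := by
          rw [← Complex.re_sum]
          rw [trace_aux (Δ * Δ) v]
  have hPnonneg : ∀ i j, 0 ≤ P i j := fun i j => by positivity
  -- rewrite the difference of sums
  have hdiff : (∑ i, f (μ i)) - ∑ j, f (lam j)
      = ∑ i, ∑ j, P i j * (f (μ i) - f (lam j)) := by
    have e1 : (∑ i, f (μ i)) = ∑ i, ∑ j, P i j * f (μ i) := by
      refine Finset.sum_congr rfl fun i _ => ?_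
      rw [← Finset.sum_mul, rowsum i, one_mul]
    have e2 : (∑ j, f (lam j)) = ∑ i, ∑ j, P i j * f (lam j) := by
      rw [Finset.sum_comm]
      refine Finset.sum_congr rfl fun j _ => ?_
      rw [← Finset.sum_mul, colsum j, one_mul]
    rw [e1, e2, ← Finset.sum_sub_distrib]
    refine Finset.sum_congr rfl fun i _ => ?_
    rw [← Finset.sum_sub_distrib]
    refine Finset.sum_congr rfl fun j _ => ?_
    ring
  have habs : |(∑ i, f (μ i)) - ∑ j, f (lam j)|
      ≤ (k : ℝ) * ∑ i, ∑ j, P i j * |d i j| := by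
    rw [hdiff]
    calc |∑ i, ∑ j, P i j * (f (μ i) - f (lam j))|
        ≤ ∑ i, ∑ j, |P i j * (f (μ i) - f (lam j))| := by
          refine (Finset.abs_sum_le_sum_abs _ _).trans ?_
          exact Finset.sum_le_sum fun i _ => Finset.abs_sum_le_sum_abs _ _
      _ ≤ ∑ i, ∑ j, P i j * ((k : ℝ) * |d i j|) := by
          refine Finset.sum_le_sum fun i _ => Finset.sum_le_sum fun j _ => ?_
          rw [abs_mul, abs_of_nonneg (hPnonneg i j)]
          refine mul_le_mul_of_nonneg_left ?_ (hPnonneg i j)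
          have := hf.dist_le_mul (μ i) (lam j)
          rwa [Real.dist_eq, Real.dist_eq] at this
      _ = (k : ℝ) * ∑ i, ∑ j, P i j * |d i j| := by
          rw [Finset.mul_sum]
          refine Finset.sum_congr rfl fun i _ => ?_
          rw [Finset.mul_sum]
          refine Finset.sum_congr rfl fun j _ => ?_
          ring
  -- Cauchy–Schwarz
  have hcs : (∑ p : Fin n × Fin n, P p.1 p.2 * |d p.1 p.2|) ^ 2
      ≤ (∑ p : Fin n × Fin n, P p.1 p.2) * ∑ p : Fin n × Fin n, P p.1 p.2 * d p.1 p.2 ^ 2 := by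
    refine Finset.sum_sq_le_sum_mul_sum_of_sq_eq_mul _
      (fun p _ => hPnonneg p.1 p.2)
      (fun p _ => mul_nonneg (hPnonneg p.1 p.2) (sq_nonneg _))
      (fun p _ => ?_)
    rw [mul_pow, sq_abs]
    ring
  have hPsum : ∑ p : Fin n × Fin n, P p.1 p.2 = (n : ℝ) := by
    rw [← Finset.univ_product_univ, Finset.sum_product]
    simp [rowsum]
  have hPd2 : ∑ p : Fin n × Fin n, P p.1 p.2 * d p.1 p.2 ^ 2 = (Δ * Δ).trace.re := by
    rw [← Finset.univ_product_univ, Finset.sum_product]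
    exact key4
  have hsum_eq : ∑ i, ∑ j, P i j * |d i j| = ∑ p : Fin n × Fin n, P p.1 p.2 * |d p.1 p.2| := by
    rw [← Finset.univ_product_univ, Finset.sum_product]
  have hfinal : ∑ i, ∑ j, P i j * |d i j| ≤ Real.sqrt n * Real.sqrt ((Δ * Δ).trace.re) := by
    rw [hsum_eq]
    have hnn : (0 : ℝ) ≤ ∑ p : Fin n × Fin n, P p.1 p.2 * |d p.1 p.2| :=
      Finset.sum_nonneg fun p _ => mul_nonneg (hPnonneg p.1 p.2) (abs_nonneg _)
    have h2 : (∑ p : Fin n × Fin n, P p.1 p.2 * |d p.1 p.2|) ^ 2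
        ≤ (n : ℝ) * (Δ * Δ).trace.re := by
      rw [← hPsum, ← hPd2]; exact hcs
    calc ∑ p : Fin n × Fin n, P p.1 p.2 * |d p.1 p.2|
        = Real.sqrt ((∑ p : Fin n × Fin n, P p.1 p.2 * |d p.1 p.2|) ^ 2) :=
          (Real.sqrt_sq hnn).symm
      _ ≤ Real.sqrt ((n : ℝ) * (Δ * Δ).trace.re) := Real.sqrt_le_sqrt h2
      _ = Real.sqrt n * Real.sqrt ((Δ * Δ).trace.re) := Real.sqrt_mul (by positivity) _
  calc |(∑ i, f (μ i)) - ∑ j, f (lam j)|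
      ≤ (k : ℝ) * ∑ i, ∑ j, P i j * |d i j| := habs
    _ ≤ (k : ℝ) * (Real.sqrt n * Real.sqrt ((Δ * Δ).trace.re)) :=
        mul_le_mul_of_nonneg_left hfinal (by positivity)
    _ = (k : ℝ) * Real.sqrt n * Real.sqrt ((Δ * Δ).trace.re) := by ring
end

section
/- Stieltjes continuity theorem: let (μ_n)_n be a sequence of probability measures on ℝ and μ another probability measure on ℝ. Then μ_n converges to μ for the vague topology (i.e. ∫ f dμ_n → ∫ f dμ for every continuous compactly supported f : ℝ → ℝ) if and only if for every z ∈ ℂ with Im z ≠ 0, the Stieltjes transforms converge: W_{μ_n}(z) → W_μ(z) as n → ∞. -/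
open MeasureTheory Filter Complex Topology OnePoint

lemma sub_ofReal_ne (z : ℂ) (hz : z.im ≠ 0) (x : ℝ) : z - x ≠ 0 := by
  intro h; apply hz; simpa using congrArg Complex.im h

noncomputable def res (z : ℂ) (hz : z.im ≠ 0) : C(OnePoint ℝ, ℂ) where
  toFun := fun p => p.elim 0 (fun x => (z - x)⁻¹)
  continuous_toFun := by
    rw [OnePoint.continuous_iff]
    constructor
    · show Tendsto (fun x : ℝ => (z - x)⁻¹) (coclosedCompact ℝ) (𝓝 0)
      rw [Filter.coclosedCompact_eq_cocompact, ← Metric.cobounded_eq_cocompact]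
      apply tendsto_inv₀_cobounded.comp
      rw [← tendsto_norm_atTop_iff_cobounded]
      apply tendsto_atTop_mono (f := fun x : ℝ => ‖(x:ℂ)‖ - ‖z‖)
      · intro x
        calc ‖(x:ℂ)‖ - ‖z‖ ≤ ‖(x:ℂ) - z‖ := by
              have := norm_sub_norm_le (x:ℂ) z; linarith
          _ = ‖z - x‖ := norm_sub_rev _ _
      · apply tendsto_atTop_add_const_right
        have : Tendsto (fun x : ℝ => |x|) (Bornology.cobounded ℝ) atTop := by
          exact (tendsto_norm_cobounded_atTop (E := ℝ)).congr (fun x => Real.norm_eq_abs x)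
        simpa [Complex.norm_real, Real.norm_eq_abs] using this
    · show Continuous fun x : ℝ => (z - x)⁻¹
      exact ((continuous_const.sub Complex.continuous_ofReal).inv₀
        (fun x => sub_ofReal_ne z hz x))

@[simp] lemma res_coe (z : ℂ) (hz : z.im ≠ 0) (x : ℝ) :
    res z hz (x : OnePoint ℝ) = (z - x)⁻¹ := rfl

@[simp] lemma res_infty (z : ℂ) (hz : z.im ≠ 0) :
    res z hz ∞ = 0 := rfl

lemma norm_res_apply_le (z : ℂ) (hz : z.im ≠ 0) (p : OnePoint ℝ) :
    ‖res z hz p‖ ≤ |z.im|⁻¹ := by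
  induction p using OnePoint.rec with
  | infty =>
    simp only [res_infty, norm_zero]
    positivity
  | coe x =>
    rw [res_coe, norm_inv]
    apply inv_anti₀ (by positivity)
    calc |z.im| = |(z - x).im| := by simp
      _ ≤ ‖z - (x:ℂ)‖ := Complex.abs_im_le_norm _

lemma norm_res_le (z : ℂ) (hz : z.im ≠ 0) : ‖res z hz‖ ≤ |z.im|⁻¹ :=
  ContinuousMap.norm_le _ (by positivity) |>.2 (norm_res_apply_le z hz)

lemma res_mul_res (z w : ℂ) (hz : z.im ≠ 0) (hw : w.im ≠ 0) (hzw : z ≠ w) :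
    res z hz * res w hw = (w - z)⁻¹ • (res z hz - res w hw) := by
  ext p
  induction p using OnePoint.rec with
  | infty => simp
  | coe x =>
    have h1 := sub_ofReal_ne z hz x
    have h2 := sub_ofReal_ne w hw x
    have h3 : w - z ≠ 0 := sub_ne_zero.2 (Ne.symm hzw)
    simp only [ContinuousMap.mul_apply, ContinuousMap.smul_apply,
      ContinuousMap.sub_apply, res_coe, smul_eq_mul]
    field_simp
    ring

lemma star_res (z : ℂ) (hz : z.im ≠ 0) :
    star (res z hz) = res (starRingEnd ℂ z) (by simpa using hz) := by
  ext p
  induction p using OnePoint.rec with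
  | infty => simp [res_infty]
  | coe x =>
    show star (res z hz (x : OnePoint ℝ)) = _
    rw [res_coe, res_coe]
    rw [show star (z - (x:ℂ))⁻¹ = (starRingEnd ℂ) (z - (x:ℂ))⁻¹ from rfl,
      map_inv₀, map_sub]
    simp

lemma norm_res_sub_res_le (z w : ℂ) (hz : z.im ≠ 0) (hw : w.im ≠ 0) :
    ‖res w hw - res z hz‖ ≤ ‖z - w‖ * (|w.im|⁻¹ * |z.im|⁻¹) := by
  apply (ContinuousMap.norm_le _ (by positivity)).2
  intro p
  induction p using OnePoint.rec with
  | infty =>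
    simp only [ContinuousMap.sub_apply, res_infty, sub_zero, norm_zero]
    positivity
  | coe x =>
    have h1 := sub_ofReal_ne z hz x
    have h2 := sub_ofReal_ne w hw x
    have key : res w hw (x : OnePoint ℝ) - res z hz (x : OnePoint ℝ)
        = (z - w) * ((w - x)⁻¹ * (z - x)⁻¹) := by
      rw [res_coe, res_coe]
      field_simp
      ring
    rw [ContinuousMap.sub_apply, key, norm_mul, norm_mul]
    gcongr
    · calc ‖((w:ℂ) - x)⁻¹‖ = ‖res w hw (x : OnePoint ℝ)‖ := by rw [res_coe]
        _ ≤ |w.im|⁻¹ := norm_res_apply_le w hw _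
    · calc ‖((z:ℂ) - x)⁻¹‖ = ‖res z hz (x : OnePoint ℝ)‖ := by rw [res_coe]
        _ ≤ |z.im|⁻¹ := norm_res_apply_le z hz _

noncomputable def resSet : Set C(OnePoint ℝ, ℂ) :=
  {f | ∃ z : ℂ, ∃ hz : z.im ≠ 0, f = res z hz} ∪ {1}

noncomputable def resSpan : Submodule ℂ C(OnePoint ℝ, ℂ) :=
  Submodule.span ℂ resSet

noncomputable def resClos : Submodule ℂ C(OnePoint ℝ, ℂ) :=
  resSpan.topologicalClosure

lemma isClosed_resClos : IsClosed (resClos : Set C(OnePoint ℝ, ℂ)) :=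
  Submodule.isClosed_topologicalClosure _

lemma resSpan_le_resClos : resSpan ≤ resClos := Submodule.le_topologicalClosure _

lemma res_mem_resSpan (z : ℂ) (hz : z.im ≠ 0) : res z hz ∈ resSpan :=
  Submodule.subset_span (Or.inl ⟨z, hz, rfl⟩)

lemma one_mem_resSpan : (1 : C(OnePoint ℝ, ℂ)) ∈ resSpan :=
  Submodule.subset_span (Or.inr rfl)

lemma res_mul_res_mem (z w : ℂ) (hz : z.im ≠ 0) (hw : w.im ≠ 0) :
    res z hz * res w hw ∈ resClos := by
  by_cases hzw : z ≠ w
  · rw [res_mul_res z w hz hw hzw]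
    exact resSpan_le_resClos <| Submodule.smul_mem _ _ <|
      sub_mem (res_mem_resSpan z hz) (res_mem_resSpan w hw)
  push_neg at hzw
  subst hzw
  -- approximate the square by products at distinct points
  set c : ℕ → ℝ := fun k => z.im / (k + 1) with hc
  have hcpos : ∀ k : ℕ, c k ≠ 0 := fun k => div_ne_zero hz (by positivity)
  set w : ℕ → ℂ := fun k => z + Complex.I * (c k : ℝ) with hwdef
  have him : ∀ k, (w k).im = z.im + c k := by
    intro k; simp [hwdef]
  have hwim : ∀ k, (w k).im ≠ 0 := by
    intro k
    rw [him k]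
    rcases hz.lt_or_gt with h | h
    · have : c k < 0 := div_neg_of_neg_of_pos h (by positivity)
      linarith
    · have : 0 < c k := div_pos h (by positivity)
      linarith
  have hne : ∀ k, z ≠ w k := by
    intro k h
    apply hcpos k
    have : Complex.I * (c k : ℝ) = 0 := by
      have := congrArg (fun t => t - z) h
      simpa [hwdef, add_sub_cancel_left] using this.symm
    simpa [Complex.I_ne_zero, Complex.ofReal_eq_zero] using this
  have hdist : ∀ k, ‖z - w k‖ = |z.im| / (k + 1 : ℝ) := by
    intro k
    have : z - w k = -(Complex.I * (c k : ℝ)) := by rw [hwdef]; ring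
    rw [this, norm_neg, norm_mul, Complex.norm_I, one_mul, Complex.norm_real,
      Real.norm_eq_abs, hc]
    rw [abs_div]
    congr 1
    exact abs_of_pos (by positivity)
  have htendsto : Tendsto (fun k => res (w k) (hwim k)) atTop (𝓝 (res z hz)) := by
    rw [tendsto_iff_norm_sub_tendsto_zero]
    apply squeeze_zero (fun k => norm_nonneg _)
      (fun k => norm_res_sub_res_le z (w k) hz (hwim k))
    have hb : ∀ k : ℕ, ‖z - w k‖ * (|(w k).im|⁻¹ * |z.im|⁻¹)
        ≤ (|z.im| * (|z.im|⁻¹ * |z.im|⁻¹)) * (1 / (k + 1 : ℝ)) := by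
      intro k
      rw [hdist k]
      have h1 : |z.im| ≤ |(w k).im| := by
        rw [him k]
        rcases hz.lt_or_gt with h | h
        · have h2 : c k < 0 := div_neg_of_neg_of_pos h (by positivity)
          rw [abs_of_neg h, abs_of_neg (by linarith)]
          linarith
        · have h2 : 0 < c k := div_pos h (by positivity)
          rw [abs_of_pos h, abs_of_pos (by linarith)]
          linarith
      have h3 : |(w k).im|⁻¹ ≤ |z.im|⁻¹ := by
        apply inv_anti₀ (by positivity) h1
      calc |z.im| / (k + 1 : ℝ) * (|(w k).im|⁻¹ * |z.im|⁻¹)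
          ≤ |z.im| / (k + 1 : ℝ) * (|z.im|⁻¹ * |z.im|⁻¹) := by
            gcongr
        _ = (|z.im| * (|z.im|⁻¹ * |z.im|⁻¹)) * (1 / (k + 1 : ℝ)) := by ring
    apply squeeze_zero (fun k => by positivity) hb
    have := tendsto_one_div_add_atTop_nhds_zero_nat (𝕜 := ℝ)
    have h4 : Tendsto (fun k : ℕ => (1 : ℝ) / (k + 1)) atTop (𝓝 0) := by
      simpa using this
    simpa using h4.const_mul (|z.im| * (|z.im|⁻¹ * |z.im|⁻¹))
  have hmul : Tendsto (fun k => res z hz * res (w k) (hwim k)) atTop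
      (𝓝 (res z hz * res z hz)) := tendsto_const_nhds.mul htendsto
  apply isClosed_resClos.mem_of_tendsto hmul
  filter_upwards with k
  rw [res_mul_res z (w k) hz (hwim k) (hne k)]
  exact resSpan_le_resClos <| Submodule.smul_mem _ _ <|
    sub_mem (res_mem_resSpan z hz) (res_mem_resSpan (w k) (hwim k))

lemma resSet_mul_mem (p q : C(OnePoint ℝ, ℂ)) (hp : p ∈ resSet) (hq : q ∈ resSet) :
    p * q ∈ resClos := by
  rcases hp with ⟨z, hz, rfl⟩ | hp
  · rcases hq with ⟨w, hw, rfl⟩ | hq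
    · exact res_mul_res_mem z w hz hw
    · rw [Set.mem_singleton_iff] at hq
      subst hq
      rw [mul_one]
      exact resSpan_le_resClos (res_mem_resSpan z hz)
  · rw [Set.mem_singleton_iff] at hp
    subst hp
    rw [one_mul]
    exact resSpan_le_resClos (Submodule.subset_span hq)

lemma resSpan_mul_mem (p q : C(OnePoint ℝ, ℂ)) (hp : p ∈ resSpan) (hq : q ∈ resSpan) :
    p * q ∈ resClos := by
  induction hp using Submodule.span_induction with
  | mem a ha =>
    induction hq using Submodule.span_induction with
    | mem b hb => exact resSet_mul_mem a b ha hb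
    | zero => rw [mul_zero]; exact zero_mem _
    | add b c _ _ h1 h2 => rw [mul_add]; exact add_mem h1 h2
    | smul t b _ h1 => rw [mul_smul_comm]; exact Submodule.smul_mem _ _ h1
  | zero => rw [zero_mul]; exact zero_mem _
  | add a b _ _ h1 h2 => rw [add_mul]; exact add_mem h1 h2
  | smul t a _ h1 => rw [smul_mul_assoc]; exact Submodule.smul_mem _ _ h1

lemma resClos_mul_mem (p q : C(OnePoint ℝ, ℂ)) (hp : p ∈ resClos) (hq : q ∈ resClos) :
    p * q ∈ resClos := by
  have : p * q ∈ closure (resClos : Set C(OnePoint ℝ, ℂ)) := by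
    apply map_mem_closure₂ (continuous_mul) hp hq
    intro a ha b hb
    exact resSpan_mul_mem a b ha hb
  rwa [isClosed_resClos.closure_eq] at this

lemma resClos_star_mem (p : C(OnePoint ℝ, ℂ)) (hp : p ∈ resClos) : star p ∈ resClos := by
  have hspan : ∀ q ∈ resSpan, star q ∈ resClos := by
    intro q hq
    induction hq using Submodule.span_induction with
    | mem a ha =>
      rcases ha with ⟨z, hz, rfl⟩ | ha
      · rw [star_res]
        exact resSpan_le_resClos (res_mem_resSpan _ _)
      · rw [Set.mem_singleton_iff] at ha
        subst ha
        rw [star_one]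
        exact resSpan_le_resClos one_mem_resSpan
    | zero => rw [star_zero]; exact zero_mem _
    | add a b _ _ h1 h2 => rw [star_add]; exact add_mem h1 h2
    | smul t a _ h1 => rw [star_smul]; exact Submodule.smul_mem _ _ h1
  have h1 : star p ∈ star '' closure (resSpan : Set C(OnePoint ℝ, ℂ)) :=
    ⟨p, hp, rfl⟩
  have h2 : star '' closure (resSpan : Set C(OnePoint ℝ, ℂ))
      ⊆ closure (star '' (resSpan : Set C(OnePoint ℝ, ℂ))) :=
    image_closure_subset_closure_image continuous_star
  have h3 : closure (star '' (resSpan : Set C(OnePoint ℝ, ℂ)))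
      ⊆ (resClos : Set C(OnePoint ℝ, ℂ)) := by
    rw [← isClosed_resClos.closure_eq]
    apply closure_mono
    rintro _ ⟨q, hq, rfl⟩
    exact hspan q hq
  exact h3 (h2 h1)

/-- The closure of the span of resolvents and constants, as a star subalgebra. -/
noncomputable def resAlg : StarSubalgebra ℂ C(OnePoint ℝ, ℂ) where
  carrier := (resClos : Set C(OnePoint ℝ, ℂ))
  mul_mem' := fun {a b} ha hb => resClos_mul_mem a b ha hb
  one_mem' := resSpan_le_resClos one_mem_resSpan
  add_mem' := fun {a b} ha hb => add_mem ha hb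
  zero_mem' := zero_mem _
  algebraMap_mem' := fun c => by
    have : (algebraMap ℂ C(OnePoint ℝ, ℂ)) c = c • (1 : C(OnePoint ℝ, ℂ)) := by
      rw [Algebra.algebraMap_eq_smul_one]
    rw [this]
    exact Submodule.smul_mem _ _ (resSpan_le_resClos one_mem_resSpan)
  star_mem' := fun {a} ha => resClos_star_mem a ha

lemma resAlg_eq_top : resAlg = ⊤ := by
  have hsep : resAlg.SeparatesPoints := by
    intro x y hxy
    refine ⟨res Complex.I (by rw [Complex.I_im]; exact one_ne_zero), ?_, ?_⟩
    · exact ⟨res Complex.I (by simp), resSpan_le_resClos (res_mem_resSpan _ _), rfl⟩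
    · induction x using OnePoint.rec with
      | infty =>
        induction y using OnePoint.rec with
        | infty => exact absurd rfl hxy
        | coe b =>
          simp only [res_infty, res_coe]
          intro h
          exact sub_ofReal_ne Complex.I (by simp) b (inv_eq_zero.mp h.symm)
      | coe a =>
        induction y using OnePoint.rec with
        | infty =>
          simp only [res_infty, res_coe]
          intro h
          exact sub_ofReal_ne Complex.I (by simp) a (inv_eq_zero.mp h)
        | coe b =>
          simp only [res_coe]
          intro h
          apply hxy
          have h1 := sub_ofReal_ne Complex.I (by simp) a
          have h2 := sub_ofReal_ne Complex.I (by simp) b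
          rw [inv_inj] at h
          have : (a : ℂ) = b := by
            have := congrArg (fun t => Complex.I - t) h
            simpa using this
          norm_cast at this
          rw [this]
  have h1 := ContinuousMap.starSubalgebra_topologicalClosure_eq_top_of_separatesPoints resAlg hsep
  have h2 : resAlg.topologicalClosure ≤ resAlg :=
    StarSubalgebra.topologicalClosure_minimal le_rfl isClosed_resClos
  rw [h1] at h2
  exact le_antisymm le_top h2

lemma mem_resClos (f : C(OnePoint ℝ, ℂ)) : f ∈ resClos := by
  have : f ∈ resAlg := by rw [resAlg_eq_top]; trivial
  exact this


lemma integrable_of_bdd {ν : Measure ℝ} [IsFiniteMeasure ν] {g : ℝ → ℂ}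
    (hg : Continuous g) {C : ℝ} (h : ∀ x, ‖g x‖ ≤ C) : Integrable g ν :=
  Integrable.mono' (integrable_const C) hg.aestronglyMeasurable (ae_of_all _ h)

lemma dist_integral_le {ν : Measure ℝ} [IsProbabilityMeasure ν] {f g : ℝ → ℂ}
    (hf : Integrable f ν) (hg : Integrable g ν) {ε : ℝ}
    (h : ∀ x, ‖f x - g x‖ ≤ ε) :
    dist (∫ x, f x ∂ν) (∫ x, g x ∂ν) ≤ ε := by
  rw [dist_eq_norm, ← integral_sub hf hg]
  calc ‖∫ x, (f x - g x) ∂ν‖ ≤ ∫ x, ‖f x - g x‖ ∂ν := norm_integral_le_integral_norm _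
    _ ≤ ∫ _x, ε ∂ν := by
        apply integral_mono ((hf.sub hg).norm) (integrable_const ε) h
    _ = ε := by simp

lemma tendsto_integral_of_approx (μn : ℕ → Measure ℝ) (μ : Measure ℝ)
    [∀ n, IsProbabilityMeasure (μn n)] [IsProbabilityMeasure μ] {f : ℝ → ℂ}
    (hf : Continuous f) {C : ℝ} (hC : ∀ x, ‖f x‖ ≤ C)
    (happrox : ∀ ε : ℝ, 0 < ε → ∃ g : ℝ → ℂ, Continuous g ∧ (∀ x, ‖f x - g x‖ ≤ ε) ∧
      Tendsto (fun n => ∫ x, g x ∂ μn n) atTop (𝓝 (∫ x, g x ∂ μ))) :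
    Tendsto (fun n => ∫ x, f x ∂ μn n) atTop (𝓝 (∫ x, f x ∂ μ)) := by
  rw [Metric.tendsto_atTop]
  intro ε hε
  obtain ⟨g, hgc, hgap, hgt⟩ := happrox (ε/4) (by positivity)
  have hgb : ∀ x, ‖g x‖ ≤ C + ε/4 := by
    intro x
    calc ‖g x‖ ≤ ‖f x‖ + ‖f x - g x‖ := by
          have := norm_sub_norm_le (f x) (g x)
          have := norm_sub_rev (f x) (g x)
          have h3 := hgap x
          calc ‖g x‖ = ‖f x - (f x - g x)‖ := by ring_nf
            _ ≤ ‖f x‖ + ‖f x - g x‖ := norm_sub_le _ _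
      _ ≤ C + ε/4 := add_le_add (hC x) (hgap x)
  rw [Metric.tendsto_atTop] at hgt
  obtain ⟨N, hN⟩ := hgt (ε/4) (by positivity)
  refine ⟨N, fun n hn => ?_⟩
  have hfi : ∀ (ν : Measure ℝ) [IsProbabilityMeasure ν], Integrable f ν :=
    fun ν _ => integrable_of_bdd hf hC
  have hgi : ∀ (ν : Measure ℝ) [IsProbabilityMeasure ν], Integrable g ν :=
    fun ν _ => integrable_of_bdd hgc hgb
  calc dist (∫ x, f x ∂ μn n) (∫ x, f x ∂ μ)
      ≤ dist (∫ x, f x ∂ μn n) (∫ x, g x ∂ μn n)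
        + dist (∫ x, g x ∂ μn n) (∫ x, g x ∂ μ)
        + dist (∫ x, g x ∂ μ) (∫ x, f x ∂ μ) := dist_triangle4 _ _ _ _
    _ < ε/4 + ε/4 + ε/4 := by
        apply add_lt_add_of_lt_of_le
        apply add_lt_add_of_le_of_lt
        · exact dist_integral_le (hfi _) (hgi _) hgap
        · exact hN n hn
        · rw [dist_comm]
          exact dist_integral_le (hfi _) (hgi _) hgap
    _ < ε := by linarith




lemma cm_integrable (g : C(OnePoint ℝ, ℂ)) (ν : Measure ℝ) [IsFiniteMeasure ν] :
    Integrable (fun x : ℝ => g (x : OnePoint ℝ)) ν :=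
  integrable_of_bdd ((map_continuous g).comp OnePoint.continuous_coe)
    (fun x => g.norm_coe_le_norm _)

lemma tendsto_integral_span (μn : ℕ → Measure ℝ) (μ : Measure ℝ)
    [∀ n, IsProbabilityMeasure (μn n)] [IsProbabilityMeasure μ]
    (hRHS : ∀ z : ℂ, z.im ≠ 0 →
      Tendsto (fun n => ∫ x : ℝ, (z - (x : ℂ))⁻¹ ∂(μn n)) atTop
        (𝓝 (∫ x : ℝ, (z - (x : ℂ))⁻¹ ∂μ)))
    (g : C(OnePoint ℝ, ℂ)) (hg : g ∈ resSpan) :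
    Tendsto (fun n => ∫ x : ℝ, g (x : OnePoint ℝ) ∂(μn n)) atTop
      (𝓝 (∫ x : ℝ, g (x : OnePoint ℝ) ∂μ)) := by
  induction hg using Submodule.span_induction with
  | mem a ha =>
    rcases ha with ⟨z, hz, rfl⟩ | ha
    · have hfun : ∀ x : ℝ, res z hz (x : OnePoint ℝ) = (z - x)⁻¹ := res_coe z hz
      simp only [hfun]
      exact hRHS z hz
    · rw [Set.mem_singleton_iff] at ha
      subst ha
      simp only [ContinuousMap.one_apply]
      have : ∀ (ν : Measure ℝ) [IsProbabilityMeasure ν],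
          ∫ _x : ℝ, (1 : ℂ) ∂ν = 1 := by
        intro ν _
        simp
      simp only [this]
      exact tendsto_const_nhds
  | zero => simp only [ContinuousMap.zero_apply, integral_zero]; exact tendsto_const_nhds
  | add a b ha hb iha ihb =>
    have key : ∀ (ν : Measure ℝ) [IsProbabilityMeasure ν],
        ∫ x : ℝ, (a + b) (x : OnePoint ℝ) ∂ν
          = (∫ x : ℝ, a (x : OnePoint ℝ) ∂ν) + ∫ x : ℝ, b (x : OnePoint ℝ) ∂ν := by
      intro ν _
      simp only [ContinuousMap.add_apply]
      exact integral_add (cm_integrable a ν) (cm_integrable b ν)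
    simp only [key]
    exact iha.add ihb
  | smul c a ha iha =>
    have key : ∀ (ν : Measure ℝ) [IsProbabilityMeasure ν],
        ∫ x : ℝ, (c • a) (x : OnePoint ℝ) ∂ν = c • ∫ x : ℝ, a (x : OnePoint ℝ) ∂ν := by
      intro ν _
      simp only [ContinuousMap.smul_apply]
      exact integral_smul c _
    simp only [key]
    exact iha.const_smul c




/-- Extension of a compactly supported continuous function to the one-point
compactification. -/
noncomputable def ccExtend (f : ℝ → ℝ) (hf : Continuous f) (hcs : HasCompactSupport f) :
    C(OnePoint ℝ, ℂ) where
  toFun := fun p => p.elim 0 (fun x => (f x : ℂ))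
  continuous_toFun := by
    rw [OnePoint.continuous_iff]
    constructor
    · show Tendsto (fun x : ℝ => ((f x : ℂ))) (coclosedCompact ℝ) (𝓝 0)
      have hev : ∀ᶠ x : ℝ in coclosedCompact ℝ, ((f x : ℂ)) = 0 := by
        have hmem : (tsupport f)ᶜ ∈ coclosedCompact ℝ :=
          hasBasis_coclosedCompact.mem_iff.2 ⟨tsupport f, ⟨isClosed_tsupport f, hcs⟩, le_rfl⟩
        filter_upwards [hmem] with x hx
        rw [image_eq_zero_of_notMem_tsupport hx, Complex.ofReal_zero]
      have hev' : (fun _ : ℝ => (0:ℂ)) =ᶠ[coclosedCompact ℝ] (fun x : ℝ => ((f x : ℂ))) := by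
        filter_upwards [hev] with x hx
        exact hx.symm
      exact Tendsto.congr' hev' tendsto_const_nhds
    · exact Complex.continuous_ofReal.comp hf

@[simp] lemma ccExtend_coe (f : ℝ → ℝ) (hf : Continuous f) (hcs : HasCompactSupport f)
    (x : ℝ) : ccExtend f hf hcs (x : OnePoint ℝ) = (f x : ℂ) := rfl

lemma backward_direction (μn : ℕ → Measure ℝ) (μ : Measure ℝ)
    [∀ n, IsProbabilityMeasure (μn n)] [IsProbabilityMeasure μ]
    (hRHS : ∀ z : ℂ, z.im ≠ 0 →
      Tendsto (fun n => ∫ x : ℝ, (z - (x : ℂ))⁻¹ ∂(μn n)) atTop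
        (𝓝 (∫ x : ℝ, (z - (x : ℂ))⁻¹ ∂μ)))
    (f : ℝ → ℝ) (hf : Continuous f) (hcs : HasCompactSupport f) :
    Tendsto (fun n => ∫ x, f x ∂(μn n)) atTop (𝓝 (∫ x, f x ∂μ)) := by
  set F : C(OnePoint ℝ, ℂ) := ccExtend f hf hcs with hF
  have hcplx : Tendsto (fun n => ∫ x : ℝ, ((f x : ℂ)) ∂(μn n)) atTop
      (𝓝 (∫ x : ℝ, ((f x : ℂ)) ∂μ)) := by
    apply tendsto_integral_of_approx μn μ
      (f := fun x : ℝ => (f x : ℂ))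
      (by exact Complex.continuous_ofReal.comp hf)
      (C := ‖F‖) (fun x => F.norm_coe_le_norm (x : OnePoint ℝ))
    intro ε hε
    have hmem : F ∈ closure (resSpan : Set C(OnePoint ℝ, ℂ)) := mem_resClos F
    rw [Metric.mem_closure_iff] at hmem
    obtain ⟨g, hg, hdist⟩ := hmem ε hε
    refine ⟨fun x : ℝ => g (x : OnePoint ℝ),
      (map_continuous g).comp OnePoint.continuous_coe, ?_, ?_⟩
    · intro x
      show ‖(f x : ℂ) - g (x : OnePoint ℝ)‖ ≤ ε
      have : (f x : ℂ) - g (x : OnePoint ℝ) = (F - g) (x : OnePoint ℝ) := by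
        simp [hF]
      rw [this]
      calc ‖(F - g) (x : OnePoint ℝ)‖ ≤ ‖F - g‖ := (F - g).norm_coe_le_norm _
        _ ≤ ε := by
          rw [← dist_eq_norm]
          exact le_of_lt hdist
    · exact tendsto_integral_span μn μ hRHS g hg
  have h2 := (Complex.continuous_re.tendsto _).comp hcplx
  have key : ∀ (ν : Measure ℝ) [IsProbabilityMeasure ν],
      (∫ x : ℝ, ((f x : ℂ)) ∂ν).re = ∫ x, f x ∂ν := by
    intro ν _
    rw [show (fun x : ℝ => ((f x : ℝ) : ℂ)) = fun x => (RCLike.ofReal (f x) : ℂ) from rfl]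
    rw [integral_ofReal]
    exact Complex.ofReal_re _
  simpa only [Function.comp_def, key] using h2


lemma norm_resolvent_le (z : ℂ) (hz : z.im ≠ 0) (x : ℝ) :
    ‖(z - (x : ℂ))⁻¹‖ ≤ |z.im|⁻¹ := by
  rw [norm_inv]
  apply inv_anti₀ (by positivity)
  calc |z.im| = |(z - (x:ℂ)).im| := by simp
    _ ≤ ‖z - (x:ℂ)‖ := Complex.abs_im_le_norm _

lemma forward_direction (μn : ℕ → Measure ℝ) (μ : Measure ℝ)
    [∀ n, IsProbabilityMeasure (μn n)] [IsProbabilityMeasure μ]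
    (hLHS : ∀ f : ℝ → ℝ, Continuous f → HasCompactSupport f →
      Tendsto (fun n => ∫ x, f x ∂(μn n)) atTop (𝓝 (∫ x, f x ∂μ)))
    (z : ℂ) (hz : z.im ≠ 0) :
    Tendsto (fun n => ∫ x : ℝ, (z - (x : ℂ))⁻¹ ∂(μn n)) atTop
      (𝓝 (∫ x : ℝ, (z - (x : ℂ))⁻¹ ∂μ)) := by
  set f : ℝ → ℂ := fun x => (z - (x : ℂ))⁻¹ with hfdef
  have hfc : Continuous f :=
    (continuous_const.sub Complex.continuous_ofReal).inv₀ (fun x => by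
      intro h; apply hz; simpa using congrArg Complex.im h)
  apply tendsto_integral_of_approx μn μ hfc (C := |z.im|⁻¹) (norm_resolvent_le z hz)
  intro ε hε
  set R : ℝ := |z.re| + ε⁻¹ with hR
  set χ : ℝ → ℝ := fun x => max 0 (min 1 (R + 1 - |x|)) with hχ
  have hχc : Continuous χ :=
    continuous_const.max (continuous_const.min (continuous_const.sub continuous_abs))
  have hχ0 : ∀ x, 0 ≤ χ x := fun x => le_max_left _ _
  have hχ1 : ∀ x, χ x ≤ 1 := fun x => max_le zero_le_one (min_le_left _ _)
  have hχeq1 : ∀ x, |x| ≤ R → χ x = 1 := by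
    intro x hx
    have h1 : (1:ℝ) ≤ R + 1 - |x| := by linarith
    rw [hχ]
    simp only [min_eq_left h1]
    exact max_eq_right zero_le_one
  have hχeq0 : ∀ x, R + 1 ≤ |x| → χ x = 0 := by
    intro x hx
    have h1 : min 1 (R + 1 - |x|) ≤ 0 := le_trans (min_le_right _ _) (by linarith)
    rw [hχ]
    exact max_eq_left h1
  set g : ℝ → ℂ := fun x => f x * (χ x : ℝ) with hg
  have hgc : Continuous g := hfc.mul (Complex.continuous_ofReal.comp hχc)
  have hgapprox : ∀ x, ‖f x - g x‖ ≤ ε := by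
    intro x
    have heq : f x - g x = f x * (1 - (χ x : ℂ)) := by rw [hg]; ring
    rw [heq, norm_mul]
    by_cases hcase : |x| ≤ R
    · rw [hχeq1 x hcase]
      simp [le_of_lt hε]
    · push_neg at hcase
      have h1 : ‖(1 : ℂ) - (χ x : ℝ)‖ ≤ 1 := by
        rw [show (1:ℂ) - (χ x : ℝ) = ((1 - χ x : ℝ) : ℂ) by push_cast; ring]
        rw [Complex.norm_real, Real.norm_eq_abs, abs_le]
        constructor <;> [linarith [hχ1 x]; linarith [hχ0 x]]
      have h2 : ‖f x‖ ≤ ε := by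
        have hge : ε⁻¹ ≤ ‖z - (x:ℂ)‖ := by
          calc ε⁻¹ = R - |z.re| := by rw [hR]; ring
            _ ≤ |x| - |z.re| := by linarith
            _ ≤ |x - z.re| := by
                have := abs_sub_abs_le_abs_sub x z.re; linarith [this]
            _ = |(z - (x:ℂ)).re| := by
                rw [show (z - (x:ℂ)).re = z.re - x by simp]
                rw [abs_sub_comm]
            _ ≤ ‖z - (x:ℂ)‖ := Complex.abs_re_le_norm _
        rw [hfdef]
        simp only [norm_inv]
        calc ‖z - (x:ℂ)‖⁻¹ ≤ (ε⁻¹)⁻¹ := inv_anti₀ (by positivity) hge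
          _ = ε := inv_inv ε
      calc ‖f x‖ * ‖1 - ((χ x : ℝ) : ℂ)‖ ≤ ε * 1 :=
            mul_le_mul h2 h1 (norm_nonneg _) (le_of_lt hε)
        _ = ε := mul_one ε
  refine ⟨g, hgc, hgapprox, ?_⟩
  -- decompose g into real and imaginary parts
  set gr : ℝ → ℝ := fun x => (g x).re with hgr
  set gi : ℝ → ℝ := fun x => (g x).im with hgi
  have hgrc : Continuous gr := Complex.continuous_re.comp hgc
  have hgic : Continuous gi := Complex.continuous_im.comp hgc
  have hsupp : ∀ x : ℝ, x ∉ Set.Icc (-(R+1)) (R+1) → g x = 0 := by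
    intro x hx
    have : R + 1 ≤ |x| := by
      rw [Set.mem_Icc] at hx
      push_neg at hx
      rcases le_or_gt (-(R+1)) x with h | h
      · exact le_abs.2 (Or.inl (le_of_lt (hx h)))
      · exact le_abs.2 (Or.inr (by linarith))
    rw [hg]
    simp [hχeq0 x this]
  have hgrcs : HasCompactSupport gr := by
    apply HasCompactSupport.intro (isCompact_Icc (a := -(R+1)) (b := R+1))
    intro x hx
    rw [hgr]
    simp [hsupp x hx]
  have hgics : HasCompactSupport gi := by
    apply HasCompactSupport.intro (isCompact_Icc (a := -(R+1)) (b := R+1))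
    intro x hx
    rw [hgi]
    simp [hsupp x hx]
  have hbound : ∀ x, ‖g x‖ ≤ |z.im|⁻¹ := by
    intro x
    rw [hg, norm_mul]
    have hno : ‖((χ x : ℝ) : ℂ)‖ ≤ 1 := by
      rw [Complex.norm_real, Real.norm_eq_abs, _root_.abs_of_nonneg (hχ0 x)]
      exact hχ1 x
    have := mul_le_mul (norm_resolvent_le z hz x) hno (norm_nonneg _)
      (by positivity : (0:ℝ) ≤ |z.im|⁻¹)
    linarith [this]
  have hdecomp : ∀ (ν : Measure ℝ) [IsProbabilityMeasure ν],
      ∫ x, g x ∂ν = (∫ x, gr x ∂ν) • (1:ℂ) + (∫ x, gi x ∂ν) • Complex.I := by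
    intro ν _
    rw [← integral_smul_const gr (1:ℂ), ← integral_smul_const gi Complex.I]
    rw [← integral_add]
    · congr 1
      funext x
      rw [hgr, hgi]
      simp only [real_smul, ofReal_re, ofReal_im, smul_eq_mul, mul_one]
      exact (Complex.re_add_im (g x)).symm
    · apply integrable_of_bdd (C := |z.im|⁻¹)
      · exact (hgrc).smul (continuous_const : Continuous fun _ : ℝ => (1:ℂ))
      · intro x
        rw [norm_smul, Real.norm_eq_abs, norm_one, mul_one, hgr]
        calc |(g x).re| ≤ ‖g x‖ := Complex.abs_re_le_norm _
          _ ≤ |z.im|⁻¹ := hbound x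
    · apply integrable_of_bdd (C := |z.im|⁻¹)
      · exact (hgic).smul (continuous_const : Continuous fun _ : ℝ => Complex.I)
      · intro x
        rw [norm_smul, Real.norm_eq_abs, Complex.norm_I, mul_one, hgi]
        calc |(g x).im| ≤ ‖g x‖ := Complex.abs_im_le_norm _
          _ ≤ |z.im|⁻¹ := hbound x
  have h1 := hLHS gr hgrc hgrcs
  have h2 := hLHS gi hgic hgics
  have e1 : (fun n => ∫ x, g x ∂ μn n)
      = fun n => (∫ x, gr x ∂ μn n) • (1:ℂ) + (∫ x, gi x ∂ μn n) • Complex.I :=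
    funext fun n => hdecomp (μn n)
  rw [e1, hdecomp μ]
  exact (h1.smul_const (1:ℂ)).add (h2.smul_const Complex.I)


/-- **Stieltjes continuity theorem.**  A sequence of probability measures `μₙ` on `ℝ`
converges vaguely to a probability measure `μ` (i.e. against every continuous compactly
supported function) if and only if for every `z ∈ ℂ` with `Im z ≠ 0` the Stieltjes
transforms `W_{μₙ}(z) = ∫ (z - x)⁻¹ dμₙ(x)` converge to `W_μ(z)`. -/
theorem stieltjes_continuity (μn : ℕ → Measure ℝ) (μ : Measure ℝ)
    [∀ n, IsProbabilityMeasure (μn n)] [IsProbabilityMeasure μ] :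
    (∀ f : ℝ → ℝ, Continuous f → HasCompactSupport f →
      Tendsto (fun n => ∫ x, f x ∂(μn n)) atTop (nhds (∫ x, f x ∂μ)))
    ↔ (∀ z : ℂ, z.im ≠ 0 →
      Tendsto (fun n => ∫ x : ℝ, (z - (x : ℂ))⁻¹ ∂(μn n)) atTop
        (nhds (∫ x : ℝ, (z - (x : ℂ))⁻¹ ∂μ))) := by
  constructor
  · intro hLHS z hz
    exact forward_direction μn μ hLHS z hz
  · intro hRHS f hf hcs
    exact backward_direction μn μ hRHS f hf hcs
end

section
/- Stieltjes inversion by Cauchy smoothing: let μ be a probability measure on ℝ and let C_η denote the Cauchy distribution of width η > 0, with density η/(π(x² + η²)). Then for every bounded continuous f : ℝ → ℝ, lim_{η→0⁺} ∫_ℝ f d(μ ⋆ C_η) = ∫_ℝ f dμ, where μ ⋆ C_η is the convolution, whose density at y equals ∫_ℝ (η/π)·dμ(x)/((y − x)² + η²) = −(1/π) Im W_μ(y + iη). -/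
open MeasureTheory Filter

lemma cauchy_kernel_integrable {η : ℝ} (hη : 0 < η) (x : ℝ) :
    Integrable (fun y : ℝ => (η / Real.pi) / ((y - x) ^ 2 + η ^ 2)) := by
  have h1 : Integrable (fun t : ℝ => (1 + t ^ 2)⁻¹) := integrable_inv_one_add_sq
  have h2 : Integrable (fun t : ℝ => (1 + (t / η) ^ 2)⁻¹) :=
    h1.comp_div hη.ne'
  have h3 : Integrable (fun y : ℝ => (1 + ((y - x) / η) ^ 2)⁻¹) :=
    h2.comp_sub_right x
  have h4 := h3.const_mul (1 / (Real.pi * η))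
  refine h4.congr (Filter.Eventually.of_forall fun y => ?_)
  have hπ : (0:ℝ) < Real.pi := Real.pi_pos
  field_simp
  ring

lemma cauchy_change_of_var (g : ℝ → ℝ) {η : ℝ} (hη : 0 < η) (x : ℝ) :
    (∫ y : ℝ, g y * ((η / Real.pi) / ((y - x) ^ 2 + η ^ 2)))
      = ∫ t : ℝ, g (x + η * t) * (Real.pi⁻¹ * ((1:ℝ) + t ^ 2)⁻¹) := by
  set G : ℝ → ℝ := fun y => g y * ((η / Real.pi) / ((y - x) ^ 2 + η ^ 2)) with hG
  have key : ∀ t : ℝ, G (x + η * t) = η⁻¹ * (g (x + η * t) * (Real.pi⁻¹ * ((1:ℝ) + t ^ 2)⁻¹)) := by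
    intro t
    have hπ : (0:ℝ) < Real.pi := Real.pi_pos
    simp only [hG]
    have : (x + η * t - x) ^ 2 + η ^ 2 = η ^ 2 * (1 + t ^ 2) := by ring
    rw [this]
    field_simp
  have h1 : (∫ t : ℝ, G (x + η * t)) = |η⁻¹| • ∫ u : ℝ, G (x + u) :=
    Measure.integral_comp_mul_left (fun u => G (x + u)) η
  have h2 : (∫ u : ℝ, G (x + u)) = ∫ y : ℝ, G y := integral_add_left_eq_self G x
  have h3 : (∫ t : ℝ, G (x + η * t)) = η⁻¹ * ∫ y : ℝ, G y := by
    rw [h1, h2, abs_of_pos (inv_pos.2 hη), smul_eq_mul]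
  have h4 : (∫ t : ℝ, G (x + η * t))
      = η⁻¹ * ∫ t : ℝ, g (x + η * t) * (Real.pi⁻¹ * ((1:ℝ) + t ^ 2)⁻¹) := by
    simp_rw [key]
    rw [integral_const_mul]
  have hηinv : η⁻¹ ≠ 0 := inv_ne_zero hη.ne'
  have := h3.symm.trans h4
  exact (mul_left_cancel₀ hηinv this)

/-- **Stieltjes inversion by Cauchy smoothing.**  Let `μ` be a probability measure on
`ℝ` and let `μ ⋆ C_η` be its convolution with the Cauchy distribution of width `η > 0`,
whose density at `y` is `∫ (η/π)/((y-x)² + η²) dμ(x)`.  Then for every bounded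
continuous `f : ℝ → ℝ`, `∫ f d(μ ⋆ C_η) → ∫ f dμ` as `η → 0⁺`. -/
theorem stieltjes_inversion_cauchy_smoothing
    (μ : Measure ℝ) [IsProbabilityMeasure μ]
    (f : ℝ → ℝ) (hf : Continuous f) (hfb : ∃ C, ∀ x, |f x| ≤ C) :
    Tendsto (fun η : ℝ =>
        ∫ y : ℝ, f y * ∫ x : ℝ, (η / Real.pi) / ((y - x) ^ 2 + η ^ 2) ∂μ)
      (nhdsWithin 0 (Set.Ioi 0)) (nhds (∫ x, f x ∂μ)) := by
  obtain ⟨C, hC⟩ := hfb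
  have hC0 : 0 ≤ C := le_trans (abs_nonneg _) (hC 0)
  have hπ : (0:ℝ) < Real.pi := Real.pi_pos
  have hI1 : Integrable (fun t : ℝ => (1 + t ^ 2)⁻¹) := integrable_inv_one_add_sq
  have hc2 : Continuous fun t : ℝ => Real.pi⁻¹ * ((1:ℝ) + t ^ 2)⁻¹ :=
    continuous_const.mul ((continuous_const.add (continuous_pow 2)).inv₀ fun t => (by positivity : (0:ℝ) < 1 + t ^ 2).ne')
  have hcauchy_total : ∀ {η : ℝ}, 0 < η → ∀ x : ℝ,
      (∫ y : ℝ, (η / Real.pi) / ((y - x) ^ 2 + η ^ 2)) = 1 := by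
    intro η hη x
    have := cauchy_change_of_var (fun _ => (1:ℝ)) hη x
    simp only [one_mul] at this
    rw [this, integral_const_mul, integral_univ_inv_one_add_sq,
      inv_mul_cancel₀ hπ.ne']
  set g : ℝ → ℝ → ℝ := fun η x => ∫ t : ℝ, f (x + η * t) * (Real.pi⁻¹ * ((1:ℝ) + t ^ 2)⁻¹)
    with hg
  have hbound_t : Integrable (fun t : ℝ => C * (Real.pi⁻¹ * ((1:ℝ) + t ^ 2)⁻¹)) :=
    (hI1.const_mul _).const_mul _
  have hbound_int : (∫ t : ℝ, C * (Real.pi⁻¹ * ((1:ℝ) + t ^ 2)⁻¹)) = C := by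
    rw [integral_const_mul, integral_const_mul, integral_univ_inv_one_add_sq]
    field_simp
  have hg_bound : ∀ (η : ℝ) (x : ℝ), |g η x| ≤ C := by
    intro η x
    rw [hg, ← Real.norm_eq_abs]
    refine (norm_integral_le_integral_norm _).trans (le_trans ?_ hbound_int.le)
    refine integral_mono_of_nonneg (Filter.Eventually.of_forall fun t => norm_nonneg _)
      hbound_t (Filter.Eventually.of_forall fun t => ?_)
    show ‖f (x + η * t) * (Real.pi⁻¹ * ((1:ℝ) + t ^ 2)⁻¹)‖ ≤ C * (Real.pi⁻¹ * ((1:ℝ) + t ^ 2)⁻¹)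
    rw [norm_mul, Real.norm_eq_abs, Real.norm_eq_abs,
      abs_of_nonneg (by positivity : (0:ℝ) ≤ Real.pi⁻¹ * ((1:ℝ) + t ^ 2)⁻¹)]
    exact mul_le_mul_of_nonneg_right (hC _) (by positivity)
  have key : ∀ {η : ℝ}, 0 < η →
      (∫ y : ℝ, f y * ∫ x : ℝ, (η / Real.pi) / ((y - x) ^ 2 + η ^ 2) ∂μ)
        = ∫ x : ℝ, g η x ∂μ := by
    intro η hη
    have hden : ∀ p : ℝ × ℝ, (p.1 - p.2) ^ 2 + η ^ 2 ≠ 0 := by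
      intro p; positivity
    have hker : Continuous fun p : ℝ × ℝ => (η / Real.pi) / ((p.1 - p.2) ^ 2 + η ^ 2) :=
      continuous_const.div (by fun_prop) hden
    have hFcont : Continuous fun p : ℝ × ℝ =>
        f p.1 * ((η / Real.pi) / ((p.1 - p.2) ^ 2 + η ^ 2)) :=
      (hf.comp continuous_fst).mul hker
    have hFint : Integrable (Function.uncurry fun y x : ℝ =>
        f y * ((η / Real.pi) / ((y - x) ^ 2 + η ^ 2))) (volume.prod μ) := by
      refine (integrable_prod_iff' hFcont.aestronglyMeasurable).mpr ⟨?_, ?_⟩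
      · refine Filter.Eventually.of_forall fun x => ?_
        exact (cauchy_kernel_integrable hη x).bdd_mul (c := C) hf.aestronglyMeasurable
          (Filter.Eventually.of_forall fun y => by simpa [Real.norm_eq_abs] using hC y)
      · have hmeas : AEStronglyMeasurable
            (fun x : ℝ => ∫ y : ℝ, ‖f y * ((η / Real.pi) / ((y - x) ^ 2 + η ^ 2))‖) μ := by
          exact (hFcont.norm.stronglyMeasurable.integral_prod_left').aestronglyMeasurable
        refine Integrable.mono' (integrable_const C) hmeas
          (Filter.Eventually.of_forall fun x => ?_)
        have h1 : ∀ y : ℝ, ‖f y * ((η / Real.pi) / ((y - x) ^ 2 + η ^ 2))‖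
            ≤ C * ((η / Real.pi) / ((y - x) ^ 2 + η ^ 2)) := by
          intro y
          rw [norm_mul, Real.norm_eq_abs, Real.norm_eq_abs,
            abs_of_nonneg (by positivity : (0:ℝ) ≤ (η / Real.pi) / ((y - x) ^ 2 + η ^ 2))]
          exact mul_le_mul_of_nonneg_right (hC y) (by positivity)
        have h2 : (∫ y : ℝ, ‖f y * ((η / Real.pi) / ((y - x) ^ 2 + η ^ 2))‖)
            ≤ ∫ y : ℝ, C * ((η / Real.pi) / ((y - x) ^ 2 + η ^ 2)) := by
          refine integral_mono_of_nonneg (Filter.Eventually.of_forall fun y => norm_nonneg _)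
            ((cauchy_kernel_integrable hη x).const_mul C)
            (Filter.Eventually.of_forall h1)
        rw [Real.norm_eq_abs, abs_of_nonneg (integral_nonneg fun y => norm_nonneg _)]
        calc (∫ y : ℝ, ‖f y * ((η / Real.pi) / ((y - x) ^ 2 + η ^ 2))‖)
            ≤ ∫ y : ℝ, C * ((η / Real.pi) / ((y - x) ^ 2 + η ^ 2)) := h2
          _ = C := by rw [integral_const_mul, hcauchy_total hη x, mul_one]
    calc (∫ y : ℝ, f y * ∫ x : ℝ, (η / Real.pi) / ((y - x) ^ 2 + η ^ 2) ∂μ)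
        = ∫ y : ℝ, ∫ x : ℝ, f y * ((η / Real.pi) / ((y - x) ^ 2 + η ^ 2)) ∂μ := by
          simp_rw [integral_const_mul]
      _ = ∫ x : ℝ, (∫ y : ℝ, f y * ((η / Real.pi) / ((y - x) ^ 2 + η ^ 2))) ∂μ :=
          (integral_integral_swap hFint)
      _ = ∫ x : ℝ, g η x ∂μ := by
          refine integral_congr_ae (Filter.Eventually.of_forall fun x => ?_)
          exact cauchy_change_of_var f hη x
  have hlim : Tendsto (fun η : ℝ => ∫ x : ℝ, g η x ∂μ)
      (nhdsWithin 0 (Set.Ioi 0)) (nhds (∫ x, f x ∂μ)) := by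
    refine tendsto_integral_filter_of_dominated_convergence (fun _ => C) ?_ ?_
      (integrable_const C) ?_
    · refine Filter.Eventually.of_forall fun η => ?_
      have : Continuous fun x : ℝ => g η x := by
        refine continuous_of_dominated (bound := fun t : ℝ => C * (Real.pi⁻¹ * ((1:ℝ) + t ^ 2)⁻¹))
          (fun x => ?_) (fun x => Filter.Eventually.of_forall fun t => ?_) hbound_t
          (Filter.Eventually.of_forall fun t => ?_)
        · exact (((hf.comp (continuous_const.add (continuous_mul_left η))).mul
            hc2)).aestronglyMeasurable
        · show ‖f (x + η * t) * (Real.pi⁻¹ * ((1:ℝ) + t ^ 2)⁻¹)‖ ≤ C * (Real.pi⁻¹ * ((1:ℝ) + t ^ 2)⁻¹)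
          rw [norm_mul, Real.norm_eq_abs, Real.norm_eq_abs,
            abs_of_nonneg (by positivity : (0:ℝ) ≤ Real.pi⁻¹ * ((1:ℝ) + t ^ 2)⁻¹)]
          exact mul_le_mul_of_nonneg_right (hC _) (by positivity)
        · exact ((hf.comp (continuous_add_right (η * t))).mul continuous_const)
      exact this.aestronglyMeasurable
    · refine Filter.Eventually.of_forall fun η => Filter.Eventually.of_forall fun x => ?_
      simpa [Real.norm_eq_abs] using hg_bound η x
    · refine Filter.Eventually.of_forall fun x => ?_
      have target : (∫ t : ℝ, f x * (Real.pi⁻¹ * ((1:ℝ) + t ^ 2)⁻¹)) = f x := by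
        rw [integral_const_mul, integral_const_mul, integral_univ_inv_one_add_sq]
        field_simp
      rw [← target]
      refine tendsto_integral_filter_of_dominated_convergence
        (fun t : ℝ => C * (Real.pi⁻¹ * ((1:ℝ) + t ^ 2)⁻¹)) ?_ ?_ hbound_t ?_
      · refine Filter.Eventually.of_forall fun η => ?_
        exact (((hf.comp (continuous_const.add (continuous_mul_left η))).mul
          hc2)).aestronglyMeasurable
      · refine Filter.Eventually.of_forall fun η => Filter.Eventually.of_forall fun t => ?_
        show ‖f (x + η * t) * (Real.pi⁻¹ * ((1:ℝ) + t ^ 2)⁻¹)‖ ≤ C * (Real.pi⁻¹ * ((1:ℝ) + t ^ 2)⁻¹)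
        rw [norm_mul, Real.norm_eq_abs, Real.norm_eq_abs,
          abs_of_nonneg (by positivity : (0:ℝ) ≤ Real.pi⁻¹ * ((1:ℝ) + t ^ 2)⁻¹)]
        exact mul_le_mul_of_nonneg_right (hC _) (by positivity)
      · refine Filter.Eventually.of_forall fun t => ?_
        have h1 : Tendsto (fun η : ℝ => x + η * t) (nhdsWithin 0 (Set.Ioi 0)) (nhds x) := by
          have h2 : Tendsto (fun η : ℝ => x + η * t) (nhds 0) (nhds x) := by
            have h3 : Continuous fun η : ℝ => x + η * t :=
              continuous_const.add (continuous_mul_right t)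
            simpa using h3.tendsto 0
          exact h2.mono_left nhdsWithin_le_nhds
        exact ((hf.tendsto x).comp h1).mul_const _
  refine hlim.congr' ?_
  filter_upwards [self_mem_nhdsWithin] with η hη
  exact (key hη).symm
end

section
/- Andréief-type identity for the partition function: let w : ℝ → [0, ∞) be a measurable weight function such that ∫ |x|^k w(x) dx < ∞ for all k ≥ 0, and let (Q_m)_{m ≥ 0} be any sequence of monic real polynomials with deg Q_m = m. Then for every n ≥ 1, ∫_{ℝ^n} ∏_{1 ≤ i < j ≤ n} (λ_j − λ_i)² ∏_{i=1}^n w(λ_i) dλ_i = n! · det_{1 ≤ i,j ≤ n} [ ∫_ℝ Q_{i−1}(x) Q_{j−1}(x) w(x) dx ]. -/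
open MeasureTheory Finset

-- integrability lemma
lemma poly_mul_w_integrable (w : ℝ → ℝ) (hw_meas : Measurable w) (hw_nonneg : ∀ x, 0 ≤ w x)
    (hw_mom : ∀ k : ℕ, Integrable (fun x => |x| ^ k * w x)) (P : Polynomial ℝ) :
    Integrable (fun x => P.eval x * w x) := by
  have hxk : ∀ k : ℕ, Integrable (fun x : ℝ => x ^ k * w x) := by
    intro k
    refine (hw_mom k).mono' ?_ ?_
    · exact ((measurable_id.pow_const k).mul hw_meas).aestronglyMeasurable
    · filter_upwards with x
      rw [Real.norm_eq_abs, abs_mul, abs_pow, abs_of_nonneg (hw_nonneg x)]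
  have : (fun x => P.eval x * w x)
      = fun x => ∑ k ∈ Finset.range (P.natDegree + 1), P.coeff k * (x ^ k * w x) := by
    funext x
    rw [Polynomial.eval_eq_sum_range, Finset.sum_mul]
    exact Finset.sum_congr rfl fun k _ => by ring
  rw [this]
  exact integrable_finset_sum _ fun k _ => (hxk k).const_mul _

lemma double_perm_sum (n : ℕ) (M : Matrix (Fin n) (Fin n) ℝ) :
    ∑ σ : Equiv.Perm (Fin n), ∑ τ : Equiv.Perm (Fin n),
      ((Equiv.Perm.sign σ : ℤ) : ℝ) * ((Equiv.Perm.sign τ : ℤ) : ℝ) * ∏ i, M (σ i) (τ i)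
      = (n.factorial : ℝ) * M.det := by
  have key : ∀ σ : Equiv.Perm (Fin n),
      ∑ τ : Equiv.Perm (Fin n),
        ((Equiv.Perm.sign σ : ℤ) : ℝ) * ((Equiv.Perm.sign τ : ℤ) : ℝ) * ∏ i, M (σ i) (τ i)
        = M.det := by
    intro σ
    rw [← Equiv.sum_comp (Equiv.mulRight σ)
      (fun τ => ((Equiv.Perm.sign σ : ℤ) : ℝ) * ((Equiv.Perm.sign τ : ℤ) : ℝ)
        * ∏ i, M (σ i) (τ i))]
    have : ∀ ρ : Equiv.Perm (Fin n),
        ((Equiv.Perm.sign σ : ℤ) : ℝ) * ((Equiv.Perm.sign (Equiv.mulRight σ ρ) : ℤ) : ℝ)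
          * ∏ i, M (σ i) ((Equiv.mulRight σ ρ) i)
        = ((Equiv.Perm.sign ρ : ℤ) : ℝ) * ∏ i, M i (ρ i) := by
      intro ρ
      have h1 : (Equiv.mulRight σ ρ : Equiv.Perm (Fin n)) = ρ * σ := rfl
      have h2 : ∀ i, (ρ * σ) (σ⁻¹ i) = ρ i := by
        intro i; simp [Equiv.Perm.mul_apply]
      have hprod : ∏ i, M (σ i) ((ρ * σ) i) = ∏ i, M i (ρ i) := by
        rw [← Equiv.prod_comp σ (fun k => M k (ρ k))]
        exact Finset.prod_congr rfl fun i _ => by simp [Equiv.Perm.mul_apply]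
      rw [h1, hprod]
      have hs : ((Equiv.Perm.sign σ : ℤ) : ℝ) * ((Equiv.Perm.sign (ρ * σ) : ℤ) : ℝ)
          = ((Equiv.Perm.sign ρ : ℤ) : ℝ) := by
        rw [Equiv.Perm.sign_mul]
        push_cast
        rcases Int.units_eq_one_or (Equiv.Perm.sign σ) with h | h <;> rw [h] <;> push_cast <;> ring
      rw [hs]
    simp_rw [this]
    rw [← Matrix.det_transpose M, Matrix.det_apply']
    rfl
  simp_rw [key]
  rw [Finset.sum_const, Finset.card_univ, Fintype.card_perm, Fintype.card_fin, nsmul_eq_mul]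

/-- **Andréief-type identity for the partition function.**  Let `w : ℝ → [0,∞)` be a
measurable weight with all moments finite, and `Q m` monic real polynomials of degree
`m`.  Then
`∫_{ℝⁿ} ∏_{i<j} (λ_j - λ_i)² ∏ᵢ w(λᵢ) dλ = n! det [∫ Q_{i-1}(x) Q_{j-1}(x) w(x) dx]`. -/
theorem andreief_partition_function (w : ℝ → ℝ)
    (hw_meas : Measurable w) (hw_nonneg : ∀ x, 0 ≤ w x)
    (hw_mom : ∀ k : ℕ, Integrable (fun x => |x| ^ k * w x))
    (Q : ℕ → Polynomial ℝ) (hQ : ∀ m, (Q m).Monic) (hQdeg : ∀ m, (Q m).natDegree = m)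
    (n : ℕ) (hn : 1 ≤ n) :
    (∫ lam : Fin n → ℝ,
        (∏ i : Fin n, ∏ j ∈ Finset.Ioi i, (lam j - lam i) ^ 2) * ∏ i, w (lam i))
      = (n.factorial : ℝ) * Matrix.det (Matrix.of fun i j : Fin n =>
          ∫ x : ℝ, (Q (i : ℕ)).eval x * (Q (j : ℕ)).eval x * w x) := by
  -- the one-variable integrable pieces
  have hg : ∀ a b : ℕ, Integrable (fun x : ℝ => (Q a).eval x * (Q b).eval x * w x) := by
    intro a b
    have := poly_mul_w_integrable w hw_meas hw_nonneg hw_mom (Q a * Q b)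
    simpa [Polynomial.eval_mul, mul_assoc] using this
  -- pointwise expansion of the integrand
  have hpt : ∀ lam : Fin n → ℝ,
      (∏ i : Fin n, ∏ j ∈ Finset.Ioi i, (lam j - lam i) ^ 2) * ∏ i, w (lam i)
      = ∑ σ : Equiv.Perm (Fin n), ∑ τ : Equiv.Perm (Fin n),
          (((Equiv.Perm.sign σ : ℤ) : ℝ) * ((Equiv.Perm.sign τ : ℤ) : ℝ)) *
            ∏ i, ((Q ((σ i : Fin n) : ℕ)).eval (lam i) * (Q ((τ i : Fin n) : ℕ)).eval (lam i)
              * w (lam i)) := by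
    intro lam
    have hsq : (∏ i : Fin n, ∏ j ∈ Finset.Ioi i, (lam j - lam i) ^ 2)
        = (∏ i : Fin n, ∏ j ∈ Finset.Ioi i, (lam j - lam i)) ^ 2 := by
      simp [Finset.prod_pow]
    have hvdm : (∏ i : Fin n, ∏ j ∈ Finset.Ioi i, (lam j - lam i))
        = (Matrix.of fun i j : Fin n => (Q (j : ℕ)).eval (lam i)).det := by
      rw [← Matrix.det_vandermonde lam]
      exact Matrix.det_eval_matrixOfPolynomials_eq_det_vandermonde lam
        (fun j => Q (j : ℕ)) (fun i => hQdeg i) (fun i => hQ i)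
    have hdet : (Matrix.of fun i j : Fin n => (Q (j : ℕ)).eval (lam i)).det
        = ∑ σ : Equiv.Perm (Fin n),
            ((Equiv.Perm.sign σ : ℤ) : ℝ) * ∏ i, (Q ((σ i : Fin n) : ℕ)).eval (lam i) := by
      rw [← Matrix.det_transpose, Matrix.det_apply']
      rfl
    rw [hsq, hvdm, hdet, sq, Finset.sum_mul_sum, Finset.sum_mul]
    refine Finset.sum_congr rfl fun σ _ => ?_
    rw [Finset.sum_mul]
    refine Finset.sum_congr rfl fun τ _ => ?_
    simp only [Finset.prod_mul_distrib]
    ring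
  -- integrability of each term
  have hterm : ∀ σ τ : Equiv.Perm (Fin n),
      Integrable (fun lam : Fin n → ℝ =>
        (((Equiv.Perm.sign σ : ℤ) : ℝ) * ((Equiv.Perm.sign τ : ℤ) : ℝ)) *
          ∏ i, ((Q ((σ i : Fin n) : ℕ)).eval (lam i) * (Q ((τ i : Fin n) : ℕ)).eval (lam i)
            * w (lam i))) := by
    intro σ τ
    exact (Integrable.fintype_prod (f := fun i x =>
      (Q ((σ i : Fin n) : ℕ)).eval x * (Q ((τ i : Fin n) : ℕ)).eval x * w x)
      (fun i => hg _ _)).const_mul _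
  simp_rw [hpt]
  rw [integral_finset_sum _ (fun σ _ => integrable_finset_sum _ (fun τ _ => hterm σ τ))]
  have hswap : ∀ σ : Equiv.Perm (Fin n),
      (∫ lam : Fin n → ℝ, ∑ τ : Equiv.Perm (Fin n),
        (((Equiv.Perm.sign σ : ℤ) : ℝ) * ((Equiv.Perm.sign τ : ℤ) : ℝ)) *
          ∏ i, ((Q ((σ i : Fin n) : ℕ)).eval (lam i) * (Q ((τ i : Fin n) : ℕ)).eval (lam i)
            * w (lam i)))
      = ∑ τ : Equiv.Perm (Fin n), ∫ lam : Fin n → ℝ,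
        (((Equiv.Perm.sign σ : ℤ) : ℝ) * ((Equiv.Perm.sign τ : ℤ) : ℝ)) *
          ∏ i, ((Q ((σ i : Fin n) : ℕ)).eval (lam i) * (Q ((τ i : Fin n) : ℕ)).eval (lam i)
            * w (lam i)) :=
    fun σ => integral_finset_sum _ (fun τ _ => hterm σ τ)
  simp_rw [hswap]
  have hint : ∀ σ τ : Equiv.Perm (Fin n),
      (∫ lam : Fin n → ℝ,
        (((Equiv.Perm.sign σ : ℤ) : ℝ) * ((Equiv.Perm.sign τ : ℤ) : ℝ)) *
          ∏ i, ((Q ((σ i : Fin n) : ℕ)).eval (lam i) * (Q ((τ i : Fin n) : ℕ)).eval (lam i)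
            * w (lam i)))
      = ((Equiv.Perm.sign σ : ℤ) : ℝ) * ((Equiv.Perm.sign τ : ℤ) : ℝ) *
          ∏ i, (Matrix.of fun a b : Fin n =>
            ∫ x : ℝ, (Q (a : ℕ)).eval x * (Q (b : ℕ)).eval x * w x) (σ i) (τ i) := by
    intro σ τ
    rw [integral_const_mul]
    congr 1
    exact integral_fintype_prod_eq_prod (ι := Fin n)
      (f := fun i x => (Q ((σ i : Fin n) : ℕ)).eval x * (Q ((τ i : Fin n) : ℕ)).eval x * w x)
  calc (∑ σ : Equiv.Perm (Fin n), ∑ τ : Equiv.Perm (Fin n), ∫ lam : Fin n → ℝ,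
        (((Equiv.Perm.sign σ : ℤ) : ℝ) * ((Equiv.Perm.sign τ : ℤ) : ℝ)) *
          ∏ i, ((Q ((σ i : Fin n) : ℕ)).eval (lam i) * (Q ((τ i : Fin n) : ℕ)).eval (lam i)
            * w (lam i)))
      = ∑ σ : Equiv.Perm (Fin n), ∑ τ : Equiv.Perm (Fin n),
          ((Equiv.Perm.sign σ : ℤ) : ℝ) * ((Equiv.Perm.sign τ : ℤ) : ℝ) *
          ∏ i, (Matrix.of fun a b : Fin n =>
            ∫ x : ℝ, (Q (a : ℕ)).eval x * (Q (b : ℕ)).eval x * w x) (σ i) (τ i) := by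
        refine Finset.sum_congr rfl fun σ _ => Finset.sum_congr rfl fun τ _ => hint σ τ
    _ = (n.factorial : ℝ) * Matrix.det (Matrix.of fun i j : Fin n =>
          ∫ x : ℝ, (Q (i : ℕ)).eval x * (Q (j : ℕ)).eval x * w x) :=
        double_perm_sum n _
end

section
/- Christoffel–Darboux formula: let w : ℝ → [0, ∞) be a measurable weight with all moments finite, and let (P_m)_{m ≥ 0} be monic real polynomials with deg P_m = m satisfying ∫_ℝ P_m(x) P_k(x) w(x) dx = δ_{mk} h_m with h_m > 0. Then for every n ≥ 1 and all real x ≠ y, ∑_{k=0}^{n−1} P_k(x) P_k(y) / h_k = (P_n(x) P_{n−1}(y) − P_{n−1}(x) P_n(y)) / (h_{n−1} (x − y)). -/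
open MeasureTheory Polynomial

section CDaux

variable (w : ℝ → ℝ) (P : ℕ → Polynomial ℝ) (h : ℕ → ℝ)

lemma CD_intW (hw_meas : Measurable w) (hw_nonneg : ∀ x, 0 ≤ w x)
    (hw_mom : ∀ k : ℕ, Integrable (fun x => |x| ^ k * w x)) (p : Polynomial ℝ) :
    Integrable (fun x : ℝ => p.eval x * w x) := by
  induction p using Polynomial.induction_on' with
  | add p q hp hq => simpa [add_mul, Pi.add_def] using hp.add hq
  | monomial i c =>
    have base : Integrable (fun x : ℝ => x ^ i * w x) := by
      refine (hw_mom i).mono' ((measurable_id.pow_const i).mul hw_meas).aestronglyMeasurable ?_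
      filter_upwards with x
      rw [Real.norm_eq_abs, abs_mul, abs_pow, abs_of_nonneg (hw_nonneg x)]
    simpa [Polynomial.eval_monomial, mul_assoc] using base.const_mul c

lemma CD_intPQ (hw_meas : Measurable w) (hw_nonneg : ∀ x, 0 ≤ w x)
    (hw_mom : ∀ k : ℕ, Integrable (fun x => |x| ^ k * w x)) (p q : Polynomial ℝ) :
    Integrable (fun x : ℝ => p.eval x * q.eval x * w x) := by
  simpa [Polynomial.eval_mul] using CD_intW w hw_meas hw_nonneg hw_mom (p * q)

lemma CD_P0 (hP : ∀ m, (P m).Monic) (hPdeg : ∀ m, (P m).natDegree = m) : P 0 = 1 :=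
  ((hP 0).natDegree_eq_zero).mp (hPdeg 0)

lemma CD_orthlow (hw_meas : Measurable w) (hw_nonneg : ∀ x, 0 ≤ w x)
    (hw_mom : ∀ k : ℕ, Integrable (fun x => |x| ^ k * w x))
    (hP : ∀ m, (P m).Monic) (hPdeg : ∀ m, (P m).natDegree = m)
    (horth : ∀ m k : ℕ,
      (∫ x : ℝ, (P m).eval x * (P k).eval x * w x) = if m = k then h m else 0) :
    ∀ (d : ℕ) (q : Polynomial ℝ), q.natDegree ≤ d → ∀ k, q.natDegree < k →
      (∫ x : ℝ, (P k).eval x * q.eval x * w x) = 0 := by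
  have hP0 := CD_P0 P hP hPdeg
  intro d
  induction d with
  | zero =>
    intro q hq k hk
    have hqC : q = C (q.coeff 0) := Polynomial.eq_C_of_natDegree_le_zero hq
    have e1 : (fun x : ℝ => (P k).eval x * q.eval x * w x)
        = fun x : ℝ => q.coeff 0 * ((P k).eval x * (P 0).eval x * w x) := by
      funext x
      rw [hqC, hP0]
      simp
      ring
    rw [e1, MeasureTheory.integral_const_mul, horth k 0, if_neg (by omega), mul_zero]
  | succ d IH =>
    intro q hq k hk
    by_cases hle : q.natDegree ≤ d
    · exact IH q hle k hk
    have hdq : q.natDegree = d + 1 := by omega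
    have hq0 : q ≠ 0 := by
      intro h0; rw [h0] at hdq; simp at hdq
    set c := q.leadingCoeff with hc
    set r := q - C c * P (d + 1) with hr
    have hcne : c ≠ 0 := Polynomial.leadingCoeff_ne_zero.mpr hq0
    have hdegeq : q.degree = (C c * P (d + 1)).degree := by
      rw [Polynomial.degree_C_mul hcne, Polynomial.degree_eq_natDegree hq0,
        Polynomial.degree_eq_natDegree (hP (d+1)).ne_zero, hdq, hPdeg]
    have hlc : q.leadingCoeff = (C c * P (d + 1)).leadingCoeff := by
      rw [Polynomial.leadingCoeff_mul, Polynomial.leadingCoeff_C, (hP (d+1)).leadingCoeff, mul_one]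
    have hrdeg : r.degree < q.degree := Polynomial.degree_sub_lt hdegeq hq0 hlc
    have hrd : r.natDegree ≤ d := by
      rcases eq_or_ne r 0 with h0 | h0
      · simp [h0]
      · have := Polynomial.natDegree_lt_natDegree h0 hrdeg
        omega
    have hqeq : q = C c * P (d + 1) + r := by rw [hr]; ring
    have e1 : (fun x : ℝ => (P k).eval x * q.eval x * w x)
        = fun x : ℝ => c * ((P k).eval x * (P (d+1)).eval x * w x)
            + (P k).eval x * r.eval x * w x := by
      funext x
      conv_lhs => rw [hqeq]
      simp
      ring
    rw [e1, MeasureTheory.integral_add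
        ((CD_intPQ w hw_meas hw_nonneg hw_mom (P k) (P (d+1))).const_mul c)
        (CD_intPQ w hw_meas hw_nonneg hw_mom (P k) r),
      MeasureTheory.integral_const_mul, horth k (d+1), if_neg (by omega), mul_zero, zero_add]
    exact IH r hrd k (by omega)

lemma CD_expand (hw_meas : Measurable w) (hw_nonneg : ∀ x, 0 ≤ w x)
    (hw_mom : ∀ k : ℕ, Integrable (fun x => |x| ^ k * w x))
    (hP : ∀ m, (P m).Monic) (hPdeg : ∀ m, (P m).natDegree = m)
    (hpos : ∀ m, 0 < h m)
    (horth : ∀ m k : ℕ,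
      (∫ x : ℝ, (P m).eval x * (P k).eval x * w x) = if m = k then h m else 0) :
    ∀ (d : ℕ) (q : Polynomial ℝ), q.natDegree ≤ d → ∀ m, q.natDegree ≤ m → ∀ z : ℝ,
      q.eval z = ∑ j ∈ Finset.range (m + 1),
        (∫ x : ℝ, q.eval x * (P j).eval x * w x) / h j * (P j).eval z := by
  have hP0 := CD_P0 P hP hPdeg
  intro d
  induction d with
  | zero =>
    intro q hq m hm z
    have hqC : q = C (q.coeff 0) := Polynomial.eq_C_of_natDegree_le_zero hq
    have hint : ∀ j, (∫ x : ℝ, q.eval x * (P j).eval x * w x)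
        = q.coeff 0 * (if 0 = j then h 0 else 0) := by
      intro j
      have e : (fun x : ℝ => q.eval x * (P j).eval x * w x)
          = fun x : ℝ => q.coeff 0 * ((P 0).eval x * (P j).eval x * w x) := by
        funext x
        conv_lhs => rw [hqC]
        rw [hP0]
        simp only [Polynomial.eval_C, Polynomial.eval_one]
        ring
      rw [e, MeasureTheory.integral_const_mul, horth 0 j]
    have hterm : ∀ j ∈ Finset.range (m + 1),
        (∫ x : ℝ, q.eval x * (P j).eval x * w x) / h j * (P j).eval z
          = if j = 0 then q.coeff 0 else 0 := by
      intro j _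
      rw [hint j]
      by_cases hj : j = 0
      · subst hj
        rw [if_pos rfl, if_pos rfl, hP0]
        field_simp [(hpos 0).ne']
        rw [Polynomial.eval_one, mul_one]
      · rw [if_neg (fun e => hj e.symm), if_neg hj, mul_zero, zero_div, zero_mul]
    rw [Finset.sum_congr rfl hterm,
      Finset.sum_ite_eq' (Finset.range (m + 1)) 0 (fun _ => q.coeff 0),
      if_pos (Finset.mem_range.mpr (by omega))]
    conv_lhs => rw [hqC]
    simp only [Polynomial.eval_C]
  | succ d IH =>
    intro q hq m hm z
    by_cases hle : q.natDegree ≤ d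
    · exact IH q hle m hm z
    have hdq : q.natDegree = d + 1 := by omega
    have hq0 : q ≠ 0 := by
      intro h0; rw [h0] at hdq; simp at hdq
    set c := q.leadingCoeff with hc
    set r := q - C c * P (d + 1) with hr
    have hcne : c ≠ 0 := Polynomial.leadingCoeff_ne_zero.mpr hq0
    have hdegeq : q.degree = (C c * P (d + 1)).degree := by
      rw [Polynomial.degree_C_mul hcne, Polynomial.degree_eq_natDegree hq0,
        Polynomial.degree_eq_natDegree (hP (d + 1)).ne_zero, hdq, hPdeg]
    have hlc : q.leadingCoeff = (C c * P (d + 1)).leadingCoeff := by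
      rw [Polynomial.leadingCoeff_mul, Polynomial.leadingCoeff_C, (hP (d + 1)).leadingCoeff,
        mul_one]
    have hrdeg : r.degree < q.degree := Polynomial.degree_sub_lt hdegeq hq0 hlc
    have hrd : r.natDegree ≤ d := by
      rcases eq_or_ne r 0 with h0 | h0
      · simp [h0]
      · have := Polynomial.natDegree_lt_natDegree h0 hrdeg
        omega
    have hqeq : q = C c * P (d + 1) + r := by rw [hr]; ring
    have hint : ∀ j, (∫ x : ℝ, q.eval x * (P j).eval x * w x)
        = c * (if d + 1 = j then h (d + 1) else 0)
          + (∫ x : ℝ, r.eval x * (P j).eval x * w x) := by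
      intro j
      have e : (fun x : ℝ => q.eval x * (P j).eval x * w x)
          = fun x : ℝ => c * ((P (d + 1)).eval x * (P j).eval x * w x)
              + r.eval x * (P j).eval x * w x := by
        funext x
        conv_lhs => rw [hqeq]
        simp only [Polynomial.eval_add, Polynomial.eval_mul, Polynomial.eval_C]
        ring
      rw [e, MeasureTheory.integral_add
          ((CD_intPQ w hw_meas hw_nonneg hw_mom (P (d + 1)) (P j)).const_mul c)
          (CD_intPQ w hw_meas hw_nonneg hw_mom r (P j)),
        MeasureTheory.integral_const_mul, horth (d + 1) j]
    have hterm : ∀ j ∈ Finset.range (m + 1),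
        (∫ x : ℝ, q.eval x * (P j).eval x * w x) / h j * (P j).eval z
          = (if j = d + 1 then c * (P (d + 1)).eval z else 0)
            + (∫ x : ℝ, r.eval x * (P j).eval x * w x) / h j * (P j).eval z := by
      intro j _
      rw [hint j]
      by_cases hj : j = d + 1
      · subst hj
        rw [if_pos rfl, if_pos rfl]
        field_simp [(hpos (d + 1)).ne'] <;> ring
      · rw [if_neg (fun e => hj e.symm), if_neg hj, mul_zero, zero_add, zero_add]
    rw [Finset.sum_congr rfl hterm, Finset.sum_add_distrib,
      Finset.sum_ite_eq' (Finset.range (m + 1)) (d + 1) (fun _ => c * (P (d + 1)).eval z),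
      if_pos (Finset.mem_range.mpr (by omega)), ← IH r hrd m (by omega) z]
    conv_lhs => rw [hqeq]
    simp only [Polynomial.eval_add, Polynomial.eval_mul, Polynomial.eval_C]

lemma CD_rec (hw_meas : Measurable w) (hw_nonneg : ∀ x, 0 ≤ w x)
    (hw_mom : ∀ k : ℕ, Integrable (fun x => |x| ^ k * w x))
    (hP : ∀ m, (P m).Monic) (hPdeg : ∀ m, (P m).natDegree = m)
    (hpos : ∀ m, 0 < h m)
    (horth : ∀ m k : ℕ,
      (∫ x : ℝ, (P m).eval x * (P k).eval x * w x) = if m = k then h m else 0)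
    (k : ℕ) (z : ℝ) :
    z * (P (k + 1)).eval z
      = (P (k + 2)).eval z
        + (∫ x : ℝ, x * (P (k + 1)).eval x * (P (k + 1)).eval x * w x) / h (k + 1)
            * (P (k + 1)).eval z
        + h (k + 1) / h k * (P k).eval z := by
  have subdeg : ∀ i : ℕ, (X * P i - P (i + 1)).natDegree ≤ i := by
    intro i
    have hXP : (X * P i).natDegree = i + 1 := by
      rw [Polynomial.natDegree_mul Polynomial.X_ne_zero (hP i).ne_zero,
        Polynomial.natDegree_X, hPdeg]
      omega
    have hdegeq : (X * P i).degree = (P (i + 1)).degree := by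
      rw [Polynomial.degree_eq_natDegree (mul_ne_zero Polynomial.X_ne_zero (hP i).ne_zero),
        hXP, Polynomial.degree_eq_natDegree (hP (i + 1)).ne_zero, hPdeg]
    have hlc : (X * P i).leadingCoeff = (P (i + 1)).leadingCoeff := by
      rw [Polynomial.leadingCoeff_mul, Polynomial.leadingCoeff_X, one_mul,
        (hP i).leadingCoeff, (hP (i + 1)).leadingCoeff]
    have hdlt := Polynomial.degree_sub_lt hdegeq
      (mul_ne_zero Polynomial.X_ne_zero (hP i).ne_zero) hlc
    rcases eq_or_ne (X * P i - P (i + 1)) 0 with h0 | h0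
    · simp [h0]
    · have h2 := Polynomial.natDegree_lt_natDegree h0 hdlt
      rw [hXP] at h2
      omega
  set r := X * P (k + 1) - P (k + 2) with hrdef
  have hrd : r.natDegree ≤ k + 1 := subdeg (k + 1)
  set A := ∫ x : ℝ, x * (P (k + 1)).eval x * (P (k + 1)).eval x * w x with hA
  have hint1 : ∀ j, (∫ x : ℝ, r.eval x * (P j).eval x * w x)
      = (∫ x : ℝ, (P (k + 1)).eval x * (X * P j).eval x * w x)
        - (if k + 2 = j then h (k + 2) else 0) := by
    intro j
    have e : (fun x : ℝ => r.eval x * (P j).eval x * w x)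
        = fun x : ℝ => (P (k + 1)).eval x * (X * P j).eval x * w x
            - (P (k + 2)).eval x * (P j).eval x * w x := by
      funext x
      rw [hrdef]
      simp only [Polynomial.eval_sub, Polynomial.eval_mul, Polynomial.eval_X]
      ring
    rw [e, MeasureTheory.integral_sub
        (CD_intPQ w hw_meas hw_nonneg hw_mom (P (k + 1)) (X * P j))
        (CD_intPQ w hw_meas hw_nonneg hw_mom (P (k + 2)) (P j)),
      horth (k + 2) j]
  have hXPj : ∀ j : ℕ, (X * P j).natDegree = j + 1 := by
    intro j
    rw [Polynomial.natDegree_mul Polynomial.X_ne_zero (hP j).ne_zero,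
      Polynomial.natDegree_X, hPdeg]
    omega
  have hlow : ∀ j, j < k → (∫ x : ℝ, (P (k + 1)).eval x * (X * P j).eval x * w x) = 0 := by
    intro j hj
    exact CD_orthlow w P h hw_meas hw_nonneg hw_mom hP hPdeg horth (j + 1) (X * P j)
      (le_of_eq (hXPj j)) (k + 1) (by rw [hXPj j]; omega)
  have hmid : (∫ x : ℝ, (P (k + 1)).eval x * (X * P k).eval x * w x) = h (k + 1) := by
    set s := X * P k - P (k + 1) with hsdef
    have hsd : s.natDegree ≤ k := subdeg k
    have hXk : X * P k = P (k + 1) + s := by rw [hsdef]; ring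
    have e : (fun x : ℝ => (P (k + 1)).eval x * (X * P k).eval x * w x)
        = fun x : ℝ => (P (k + 1)).eval x * (P (k + 1)).eval x * w x
            + (P (k + 1)).eval x * s.eval x * w x := by
      funext x
      rw [hXk]
      simp only [Polynomial.eval_add]
      ring
    rw [e, MeasureTheory.integral_add
        (CD_intPQ w hw_meas hw_nonneg hw_mom (P (k + 1)) (P (k + 1)))
        (CD_intPQ w hw_meas hw_nonneg hw_mom (P (k + 1)) s),
      horth (k + 1) (k + 1), if_pos rfl,
      CD_orthlow w P h hw_meas hw_nonneg hw_mom hP hPdeg horth k s hsd (k + 1) (by omega),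
      add_zero]
  have htop : (∫ x : ℝ, (P (k + 1)).eval x * (X * P (k + 1)).eval x * w x) = A := by
    rw [hA]
    congr 1
    funext x
    simp only [Polynomial.eval_mul, Polynomial.eval_X]
    ring
  have hexp := CD_expand w P h hw_meas hw_nonneg hw_mom hP hPdeg hpos horth (k + 1) r hrd
    (k + 1) hrd z
  have hterm : ∀ j ∈ Finset.range (k + 2),
      (∫ x : ℝ, r.eval x * (P j).eval x * w x) / h j * (P j).eval z
        = (if j = k + 1 then A / h (k + 1) * (P (k + 1)).eval z else 0)
          + (if j = k then h (k + 1) / h k * (P k).eval z else 0) := by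
    intro j hj
    have hj' : j ≤ k + 1 := by
      have := Finset.mem_range.mp hj; omega
    rw [hint1 j, if_neg (by omega : ¬ k + 2 = j), sub_zero]
    by_cases h1 : j = k + 1
    · subst h1
      rw [htop, if_pos rfl, if_neg (by omega), add_zero]
    · by_cases h2 : j = k
      · subst h2
        rw [hmid, if_neg h1, if_pos rfl, zero_add]
      · rw [hlow j (by omega), if_neg h1, if_neg h2, zero_div, zero_mul, add_zero]
  rw [Finset.sum_congr rfl hterm, Finset.sum_add_distrib,
    Finset.sum_ite_eq' (Finset.range (k + 2)) (k + 1)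
      (fun _ => A / h (k + 1) * (P (k + 1)).eval z),
    Finset.sum_ite_eq' (Finset.range (k + 2)) k (fun _ => h (k + 1) / h k * (P k).eval z),
    if_pos (Finset.mem_range.mpr (by omega)), if_pos (Finset.mem_range.mpr (by omega))] at hexp
  have hre : r.eval z = z * (P (k + 1)).eval z - (P (k + 2)).eval z := by
    rw [hrdef]
    simp only [Polynomial.eval_sub, Polynomial.eval_mul, Polynomial.eval_X]
  rw [hre] at hexp
  linarith [hexp]

end CDaux

/-- **Christoffel–Darboux formula.**  Let `w : ℝ → [0,∞)` be a measurable weight with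
all moments finite and `(P m)` the monic orthogonal polynomials for `w` with norms
`h m > 0`.  Then for `n ≥ 1` and `x ≠ y`,
`∑_{k=0}^{n-1} P_k(x) P_k(y)/h_k
  = (P_n(x) P_{n-1}(y) - P_{n-1}(x) P_n(y)) / (h_{n-1} (x - y))`. -/
theorem christoffel_darboux (w : ℝ → ℝ)
    (hw_meas : Measurable w) (hw_nonneg : ∀ x, 0 ≤ w x)
    (hw_mom : ∀ k : ℕ, Integrable (fun x => |x| ^ k * w x))
    (P : ℕ → Polynomial ℝ) (hP : ∀ m, (P m).Monic) (hPdeg : ∀ m, (P m).natDegree = m)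
    (h : ℕ → ℝ) (hpos : ∀ m, 0 < h m)
    (horth : ∀ m k : ℕ,
      (∫ x : ℝ, (P m).eval x * (P k).eval x * w x) = if m = k then h m else 0)
    (n : ℕ) (hn : 1 ≤ n) (x y : ℝ) (hxy : x ≠ y) :
    ∑ k ∈ Finset.range n, (P k).eval x * (P k).eval y / h k
      = ((P n).eval x * (P (n - 1)).eval y - (P (n - 1)).eval x * (P n).eval y)
          / (h (n - 1) * (x - y)) := by
  have hP0 := CD_P0 P hP hPdeg
  have key : ∀ m : ℕ,
      (x - y) * ∑ k ∈ Finset.range (m + 1), (P k).eval x * (P k).eval y / h k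
        = ((P (m + 1)).eval x * (P m).eval y - (P m).eval x * (P (m + 1)).eval y) / h m := by
    intro m
    induction m with
    | zero =>
      have hP1 : P 1 = X + C ((P 1).coeff 0) := (hP 1).eq_X_add_C (hPdeg 1)
      rw [Finset.sum_range_one, hP0]
      rw [show (0 : ℕ) + 1 = 1 from rfl, hP1]
      simp only [Polynomial.eval_one, Polynomial.eval_add, Polynomial.eval_X,
        Polynomial.eval_C, mul_one, one_mul]
      have h0 : h 0 ≠ 0 := (hpos 0).ne'
      field_simp
      ring
    | succ m IH =>
      have h1 : h m ≠ 0 := (hpos m).ne'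
      have h2 : h (m + 1) ≠ 0 := (hpos (m + 1)).ne'
      have hrx : x * (P (m + 1)).eval x
          = (P (m + 1 + 1)).eval x
            + (∫ t : ℝ, t * (P (m + 1)).eval t * (P (m + 1)).eval t * w t) / h (m + 1)
                * (P (m + 1)).eval x
            + h (m + 1) / h m * (P m).eval x :=
        CD_rec w P h hw_meas hw_nonneg hw_mom hP hPdeg hpos horth m x
      have hry : y * (P (m + 1)).eval y
          = (P (m + 1 + 1)).eval y
            + (∫ t : ℝ, t * (P (m + 1)).eval t * (P (m + 1)).eval t * w t) / h (m + 1)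
                * (P (m + 1)).eval y
            + h (m + 1) / h m * (P m).eval y :=
        CD_rec w P h hw_meas hw_nonneg hw_mom hP hPdeg hpos horth m y
      have hx2 : (P (m + 1 + 1)).eval x
          = x * (P (m + 1)).eval x
            - (∫ t : ℝ, t * (P (m + 1)).eval t * (P (m + 1)).eval t * w t) / h (m + 1)
                * (P (m + 1)).eval x
            - h (m + 1) / h m * (P m).eval x := by linarith
      have hy2 : (P (m + 1 + 1)).eval y
          = y * (P (m + 1)).eval y
            - (∫ t : ℝ, t * (P (m + 1)).eval t * (P (m + 1)).eval t * w t) / h (m + 1)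
                * (P (m + 1)).eval y
            - h (m + 1) / h m * (P m).eval y := by linarith
      rw [Finset.sum_range_succ, mul_add, IH, hx2, hy2]
      field_simp
      ring
  obtain ⟨m, rfl⟩ : ∃ m, n = m + 1 := ⟨n - 1, by omega⟩
  have hkey := key m
  have hsub : x - y ≠ 0 := sub_ne_zero.mpr hxy
  have hm : h m ≠ 0 := (hpos m).ne'
  simp only [Nat.add_sub_cancel]
  rw [eq_div_iff (mul_ne_zero hm hsub)]
  rw [(div_eq_iff hm).mp hkey.symm]
  ring
end
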